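/- arXiv:1202.6565 — 7 statements merged into one kernel-verified Lean document; each statement's English description precedes it below -/
import Mathlib

section
/- Let k ∈ (1, ∞) and θ ∈ (0, π/(2k)). Then the function f₃(r) = log(1 + (1 − r^k)/(r^k sin kθ)) / log(1 + (1 − r)/(r sin θ)) is strictly decreasing on (0, 1), with f₃(r) → k as r → 0⁺ and f₃(r) → (k sin θ)/(sin kθ) as r → 1⁻. -/
open Real Filter Topology Set


/-- Bernoulli-type: `r^p (1 + p(1-r)) ≤ 1` for `0<r<1`, `p>0`. -/
lemma aux_bern {p r : ℝ} (hp : 0 < p) (hr0 : 0 < r) (hr1 : r < 1) :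
    r ^ p * (1 + p * (1 - r)) ≤ 1 := by
  have h1 : (0:ℝ) < 1 + p * (1 - r) := by nlinarith
  have e1 : r ^ p = Real.exp (p * Real.log r) := by
    rw [Real.rpow_def_of_pos hr0, mul_comm]
  have e2 : 1 + p * (1 - r) = Real.exp (Real.log (1 + p * (1 - r))) := (Real.exp_log h1).symm
  rw [e1, e2, ← Real.exp_add]
  have h2 : Real.log r ≤ r - 1 := Real.log_le_sub_one_of_pos hr0
  have h3 : Real.log (1 + p * (1 - r)) ≤ p * (1 - r) := by
    have := Real.log_le_sub_one_of_pos h1; linarith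
  calc Real.exp (p * Real.log r + Real.log (1 + p * (1 - r)))
      ≤ Real.exp 0 := Real.exp_le_exp.2 (by nlinarith)
    _ = 1 := Real.exp_zero

/-- Key trig inequality: `k sin θ ≤ sin kθ + (k-1) sin θ sin kθ`. -/
lemma aux_key {k θ : ℝ} (hk : 1 < k) (hθ0 : 0 < θ) (hkθ : k * θ < π / 2) :
    k * Real.sin θ ≤ Real.sin (k * θ) + (k - 1) * Real.sin θ * Real.sin (k * θ) := by
  -- ψ(t) = t / sin t - t is antitone on [θ, kθ] ⊂ (0, π/2)
  set ψ : ℝ → ℝ := fun t => t / Real.sin t - t with hψ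
  have hθk : θ < k * θ := by nlinarith
  have hsub : Icc θ (k*θ) ⊆ Ioo 0 (π/2) := fun t ht =>
    ⟨lt_of_lt_of_le hθ0 ht.1, lt_of_le_of_lt ht.2 hkθ⟩
  have hsin : ∀ t ∈ Ioo (0:ℝ) (π/2), 0 < Real.sin t := fun t ht =>
    Real.sin_pos_of_pos_of_lt_pi ht.1 (lt_trans ht.2 (by linarith [Real.pi_pos]))
  have hder : ∀ t ∈ Ioo (0:ℝ) (π/2),
      HasDerivAt ψ ((1 * Real.sin t - t * Real.cos t) / (Real.sin t)^2 - 1) t := by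
    intro t ht
    exact ((hasDerivAt_id t).div (Real.hasDerivAt_sin t) (ne_of_gt (hsin t ht))).sub
      (hasDerivAt_id t)
  have hanti : AntitoneOn ψ (Icc θ (k*θ)) := by
    apply antitoneOn_of_deriv_nonpos (convex_Icc _ _)
    · intro t ht
      exact ((hder t (hsub ht)).continuousAt).continuousWithinAt
    · intro t ht
      rw [interior_Icc] at ht
      have ht' := hsub (Ioo_subset_Icc_self ht)
      exact ((hder t ht').differentiableAt).differentiableWithinAt
    · intro t ht
      rw [interior_Icc] at ht
      have ht' := hsub (Ioo_subset_Icc_self ht)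
      rw [(hder t ht').deriv, one_mul]
      have hs := hsin t ht'
      have hc : 0 < Real.cos t := Real.cos_pos_of_mem_Ioo ⟨by linarith [ht'.1, Real.pi_pos], ht'.2⟩
      have hst : Real.sin t ≤ t := Real.sin_le (le_of_lt ht'.1)
      have h1 : 1 - Real.sin t ≤ Real.cos t := by
        nlinarith [Real.sin_sq_add_cos_sq t, Real.sin_le_one t]
      have key : Real.sin t - t * Real.cos t ≤ (Real.sin t)^2 := by nlinarith
      have hs2 : (0:ℝ) < (Real.sin t)^2 := by positivity
      have := div_le_one_of_le₀ key (le_of_lt hs2)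
      linarith [this]
  have h := hanti (left_mem_Icc.2 (le_of_lt hθk)) (right_mem_Icc.2 hθk.le) (le_of_lt hθk)
  -- h : ψ (kθ) ≤ ψ θ
  have hsθ : 0 < Real.sin θ := hsin θ (hsub (left_mem_Icc.2 (le_of_lt hθk)))
  have hskθ : 0 < Real.sin (k*θ) := hsin _ (hsub (right_mem_Icc.2 hθk.le))
  simp only [hψ] at h
  rw [div_sub' (ne_of_gt hskθ), div_sub' (ne_of_gt hsθ),
    div_le_div_iff₀ hskθ hsθ] at h
  nlinarith [h]

/-- Rewriting the log expression in separated form. -/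
lemma aux_logform {a k r : ℝ} (ha0 : 0 < a) (ha1 : a < 1) (hk : 0 < k)
    (hr0 : 0 < r) (hr1 : r ≤ 1) :
    Real.log (1 + (1 - r ^ k) / (r ^ k * a)) =
      Real.log (1 - (1 - a) * r ^ k) - Real.log a - k * Real.log r := by
  have hx0 : 0 < r ^ k := Real.rpow_pos_of_pos hr0 k
  have hx1 : r ^ k ≤ 1 := Real.rpow_le_one (le_of_lt hr0) hr1 (le_of_lt hk)
  have h1 : 0 < 1 - (1 - a) * r ^ k := by nlinarith
  have h2 : (1:ℝ) + (1 - r ^ k) / (r ^ k * a) = (1 - (1 - a) * r ^ k) / (a * r ^ k) := by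
    field_simp; ring
  rw [h2, Real.log_div (ne_of_gt h1) (by positivity), Real.log_mul (ne_of_gt ha0) (ne_of_gt hx0),
    Real.log_rpow hr0]
  ring

/-- Derivative of the separated form. -/
lemma aux_deriv {a k r : ℝ} (ha0 : 0 < a) (ha1 : a < 1) (hk : 0 < k)
    (hr0 : 0 < r) (hr1 : r < 1) :
    HasDerivAt (fun t : ℝ => Real.log (1 - (1 - a) * t ^ k) - Real.log a - k * Real.log t)
      (-(k / (r * (1 - (1 - a) * r ^ k)))) r := by
  have hx0 : 0 < r ^ k := Real.rpow_pos_of_pos hr0 k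
  have hx1 : r ^ k < 1 := Real.rpow_lt_one (le_of_lt hr0) hr1 hk
  have h1 : 0 < 1 - (1 - a) * r ^ k := by nlinarith
  have hrpow : HasDerivAt (fun t : ℝ => t ^ k) (k * r ^ (k - 1)) r :=
    Real.hasDerivAt_rpow_const (Or.inl (ne_of_gt hr0))
  have hinner : HasDerivAt (fun t : ℝ => 1 - (1 - a) * t ^ k) (-((1 - a) * (k * r ^ (k-1)))) r := by
    simpa using ((hrpow.const_mul (1 - a)).const_sub 1)
  have hlog1 : HasDerivAt (fun t : ℝ => Real.log (1 - (1 - a) * t ^ k))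
      (-((1 - a) * (k * r ^ (k-1))) / (1 - (1 - a) * r ^ k)) r := hinner.log (ne_of_gt h1)
  have hlog2 : HasDerivAt (fun t : ℝ => k * Real.log t) (k * r⁻¹) r :=
    (Real.hasDerivAt_log (ne_of_gt hr0)).const_mul k
  have := (hlog1.sub_const (Real.log a)).sub hlog2
  refine this.congr_deriv ?_
  have hrk : r ^ (k - 1) * r = r ^ k := by
    have h := Real.rpow_add hr0 (k - 1) 1
    rw [Real.rpow_one] at h
    rw [← h]; norm_num
  have hpow : r ^ (k - 1) = r ^ k / r := by rw [← hrk]; field_simp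
  rw [hpow]
  field_simp
  ring

/-- The derivative-ratio function `Q` is strictly decreasing on `(0,1)`. -/
lemma aux_Q_anti {k a b : ℝ} (hk : 1 < k) (ha0 : 0 < a) (ha1 : a < 1) (hb0 : 0 < b)
    (hb1 : b < 1) (hKI : k * b ≤ a + (k - 1) * a * b) :
    StrictAntiOn (fun r : ℝ => k * (1 - (1 - b) * r) / (1 - (1 - a) * r ^ k)) (Ioo 0 1) := by
  have hk0 : 0 < k := by linarith
  have hder : ∀ r ∈ Ioo (0:ℝ) 1,
      HasDerivAt (fun r : ℝ => k * (1 - (1 - b) * r) / (1 - (1 - a) * r ^ k))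
        ((k * (-((1 - b) * 1)) * (1 - (1 - a) * r ^ k) -
          k * (1 - (1 - b) * r) * (-((1 - a) * (k * r ^ (k - 1))))) /
          (1 - (1 - a) * r ^ k) ^ 2) r := by
    intro r hr
    have hx0 : 0 < r ^ k := Real.rpow_pos_of_pos hr.1 k
    have hx1 : r ^ k < 1 := Real.rpow_lt_one (le_of_lt hr.1) hr.2 hk0
    have h1 : 0 < 1 - (1 - a) * r ^ k := by nlinarith
    have hnum : HasDerivAt (fun r : ℝ => k * (1 - (1 - b) * r)) (k * (-((1 - b) * 1))) r :=
      (((hasDerivAt_id r).const_mul (1 - b)).const_sub 1).const_mul k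
    have hrpow : HasDerivAt (fun t : ℝ => t ^ k) (k * r ^ (k - 1)) r :=
      Real.hasDerivAt_rpow_const (Or.inl (ne_of_gt hr.1))
    have hden : HasDerivAt (fun t : ℝ => 1 - (1 - a) * t ^ k)
        (-((1 - a) * (k * r ^ (k - 1)))) r := by
      simpa using ((hrpow.const_mul (1 - a)).const_sub 1)
    exact hnum.div hden (ne_of_gt h1)
  apply strictAntiOn_of_deriv_neg (convex_Ioo 0 1)
  · intro r hr
    exact ((hder r hr).differentiableAt).continuousAt.continuousWithinAt
  · intro r hr
    rw [interior_Ioo] at hr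
    rw [(hder r hr).deriv]
    have hr0 := hr.1
    have hr1 := hr.2
    have hx0 : 0 < r ^ k := Real.rpow_pos_of_pos hr0 k
    have hx1 : r ^ k < 1 := Real.rpow_lt_one (le_of_lt hr0) hr1 hk0
    have hy0 : 0 < r ^ (k - 1) := Real.rpow_pos_of_pos hr0 (k - 1)
    have h1 : 0 < 1 - (1 - a) * r ^ k := by nlinarith
    have hrk : r ^ (k - 1) * r = r ^ k := by
      have h := Real.rpow_add hr0 (k - 1) 1
      rw [Real.rpow_one] at h
      rw [← h]; norm_num
    -- Bernoulli with p = k - 1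
    have hbern := aux_bern (p := k - 1) (r := r) (by linarith) hr0 hr1
    -- h(r) < 0
    have hneg : k * (1 - a) * r ^ (k - 1) <
        (1 - b) + (k - 1) * (1 - a) * (1 - b) * r ^ k := by
      have hB : 1 - r ^ (k - 1) ≥ (k - 1) * (r ^ (k - 1) - r ^ k) := by nlinarith [hbern, hrk]
      have hx : 0 < r ^ (k - 1) - r ^ k := by nlinarith
      have hKI' : k * (1 - a) ≤ (1 - b) + (k - 1) * (1 - a) * (1 - b) := by nlinarith
      nlinarith [mul_le_mul_of_nonneg_right hKI' (le_of_lt hy0),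
        mul_le_mul_of_nonneg_left hB (by linarith : (0:ℝ) ≤ 1 - b),
        mul_pos (mul_pos (mul_pos (by linarith : (0:ℝ) < k - 1) (by linarith : (0:ℝ) < 1 - b))
          (by linarith : (0:ℝ) < a)) hx]
    apply div_neg_of_neg_of_pos
    · rw [← hrk] at hneg ⊢
      nlinarith [mul_lt_mul_of_pos_left hneg hk0]
    · positivity

lemma aux_main_anti {k a b : ℝ} (hk : 1 < k) (ha0 : 0 < a) (ha1 : a < 1) (hb0 : 0 < b)
    (hb1 : b < 1) (hKI : k * b ≤ a + (k - 1) * a * b) :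
    StrictAntiOn (fun r : ℝ =>
      Real.log (1 + (1 - r ^ k) / (r ^ k * a)) / Real.log (1 + (1 - r) / (r * b)))
      (Ioo (0:ℝ) 1) := by
  have hk0 : (0:ℝ) < k := by linarith
  set F : ℝ → ℝ := fun r => Real.log (1 + (1 - r ^ k) / (r ^ k * a)) with hF
  set G : ℝ → ℝ := fun r => Real.log (1 + (1 - r) / (r * b)) with hG
  set fder : ℝ → ℝ := fun r => -(k / (r * (1 - (1 - a) * r ^ k))) with hfder
  set gder : ℝ → ℝ := fun r => -(1 / (r * (1 - (1 - b) * r))) with hgder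
  set Q : ℝ → ℝ := fun r => k * (1 - (1 - b) * r) / (1 - (1 - a) * r ^ k) with hQdef
  -- derivatives
  have hFder : ∀ r ∈ Ioo (0:ℝ) 1, HasDerivAt F (fder r) r := by
    intro r hr
    have hd := aux_deriv ha0 ha1 hk0 hr.1 hr.2
    apply hd.congr_of_eventuallyEq
    filter_upwards [isOpen_Ioo.mem_nhds hr] with x hx
    exact aux_logform ha0 ha1 hk0 hx.1 (le_of_lt hx.2)
  have hGder : ∀ r ∈ Ioo (0:ℝ) 1, HasDerivAt G (gder r) r := by
    intro r hr
    have hd := aux_deriv hb0 hb1 one_pos hr.1 hr.2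
    simp only [Real.rpow_one] at hd
    apply hd.congr_of_eventuallyEq
    filter_upwards [isOpen_Ioo.mem_nhds hr] with x hx
    have := aux_logform hb0 hb1 one_pos hx.1 (le_of_lt hx.2)
    simpa [Real.rpow_one] using this
  -- continuity on (0,1]
  have hFcont : ∀ t ∈ Ioc (0:ℝ) 1, ContinuousAt F t := by
    intro t ht
    have hx0 : 0 < t ^ k := Real.rpow_pos_of_pos ht.1 k
    have hx1 : t ^ k ≤ 1 := Real.rpow_le_one (le_of_lt ht.1) ht.2 (le_of_lt hk0)
    have hrp : ContinuousAt (fun x : ℝ => x ^ k) t :=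
      Real.continuousAt_rpow_const t k (Or.inl (ne_of_gt ht.1))
    have hinner : ContinuousAt (fun x : ℝ => 1 + (1 - x ^ k) / (x ^ k * a)) t :=
      continuousAt_const.add (((continuousAt_const.sub hrp).div
        (hrp.mul continuousAt_const)) (ne_of_gt (mul_pos hx0 ha0)))
    have hpos : 0 < 1 + (1 - t ^ k) / (t ^ k * a) := by
      have h2 : 0 ≤ (1 - t ^ k) / (t ^ k * a) :=
        div_nonneg (by linarith) (by positivity)
      linarith
    exact ContinuousAt.log hinner (ne_of_gt hpos)
  have hGcont : ∀ t ∈ Ioc (0:ℝ) 1, ContinuousAt G t := by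
    intro t ht
    have htb : (0:ℝ) < t * b := mul_pos ht.1 hb0
    have hinner : ContinuousAt (fun x : ℝ => 1 + (1 - x) / (x * b)) t :=
      continuousAt_const.add (((continuousAt_const.sub continuousAt_id).div
        (continuousAt_id.mul continuousAt_const)) (ne_of_gt htb))
    have hpos : 0 < 1 + (1 - t) / (t * b) := by
      have h1 : 0 ≤ (1 - t) / (t * b) := div_nonneg (by linarith [ht.2]) (le_of_lt htb)
      linarith
    exact ContinuousAt.log hinner (ne_of_gt hpos)
  have hF1 : F 1 = 0 := by simp [hF, Real.one_rpow]
  have hG1 : G 1 = 0 := by simp [hG]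
  have hGpos : ∀ r ∈ Ioo (0:ℝ) 1, 0 < G r := by
    intro r hr
    apply Real.log_pos
    have : 0 < (1 - r) / (r * b) :=
      div_pos (by linarith [hr.2]) (mul_pos hr.1 hb0)
    linarith
  have hQanti := aux_Q_anti hk ha0 ha1 hb0 hb1 hKI
  have hgne : ∀ r ∈ Ioo (0:ℝ) 1, gder r ≠ 0 := by
    intro r hr
    have : 0 < r * (1 - (1 - b) * r) := by nlinarith [mul_pos hb0 hr.1, hr.1, hr.2]
    simp only [hgder]
    rw [neg_ne_zero]
    positivity
  have hfQg : ∀ r ∈ Ioo (0:ℝ) 1, fder r = Q r * gder r := by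
    intro r hr
    have hx1 : r ^ k < 1 := Real.rpow_lt_one (le_of_lt hr.1) hr.2 hk0
    have hx0 : 0 < r ^ k := Real.rpow_pos_of_pos hr.1 k
    have h1 : 0 < 1 - (1 - a) * r ^ k := by nlinarith
    have h2 : 0 < 1 - (1 - b) * r := by nlinarith [mul_pos hb0 hr.1, hr.1, hr.2]
    simp only [hfder, hgder, hQdef]
    rw [neg_eq_iff_eq_neg, mul_neg, neg_neg]
    rw [div_mul_div_comm, div_eq_div_iff (ne_of_gt (mul_pos hr.1 h1))
      (ne_of_gt (mul_pos h1 (mul_pos hr.1 h2)))]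
    ring
  -- Cauchy MVT consequence
  have hMVT : ∀ x y : ℝ, 0 < x → x < y → y ≤ 1 →
      ∃ ξ ∈ Ioo x y, F y - F x = Q ξ * (G y - G x) := by
    intro x y hx0 hxy hy1
    have hsub : Ioo x y ⊆ Ioo (0:ℝ) 1 := fun t ht =>
      ⟨lt_trans hx0 ht.1, lt_of_lt_of_le ht.2 hy1⟩
    have hsub' : Icc x y ⊆ Ioc (0:ℝ) 1 := fun t ht =>
      ⟨lt_of_lt_of_le hx0 ht.1, le_trans ht.2 hy1⟩
    obtain ⟨ξ, hξ, heq⟩ := exists_ratio_hasDerivAt_eq_ratio_slope F fder hxy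
      (fun t ht => (hFcont t (hsub' ht)).continuousWithinAt)
      (fun t ht => hFder t (hsub ht)) G gder
      (fun t ht => (hGcont t (hsub' ht)).continuousWithinAt)
      (fun t ht => hGder t (hsub ht))
    refine ⟨ξ, hξ, ?_⟩
    rw [hfQg ξ (hsub hξ)] at heq
    have hne := hgne ξ (hsub hξ)
    have h3 : ((G y - G x) * Q ξ) * gder ξ = (F y - F x) * gder ξ := by
      rw [mul_assoc]; exact heq
    have h4 := mul_right_cancel₀ hne h3
    linarith [h4]
  -- main argument
  intro r hr s hs hrs
  obtain ⟨ξ, hξ, hξeq⟩ := hMVT r s hr.1 hrs (le_of_lt hs.2)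
  obtain ⟨η, hη, hηeq⟩ := hMVT s 1 hs.1 hs.2 le_rfl
  rw [hF1, hG1] at hηeq
  have hξ01 : ξ ∈ Ioo (0:ℝ) 1 := ⟨lt_trans hr.1 hξ.1, lt_trans hξ.2 hs.2⟩
  have hη01 : η ∈ Ioo (0:ℝ) 1 := ⟨lt_trans hs.1 hη.1, hη.2⟩
  have hQlt : Q η < Q ξ := hQanti hξ01 hη01 (lt_trans hξ.2 hη.1)
  have hGs := hGpos s hs
  have hGr := hGpos r hr
  have hGrs : G s < G r := by
    simp only [hG]
    apply Real.log_lt_log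
    · have : 0 < (1 - s) / (s * b) := div_pos (by linarith [hs.2]) (mul_pos hs.1 hb0)
      linarith
    · have h1 : (1 - s) / (s * b) < (1 - r) / (r * b) := by
        rw [div_lt_div_iff₀ (mul_pos hs.1 hb0) (mul_pos hr.1 hb0)]
        nlinarith [hr.1, hrs, hb0]
      linarith
  -- F s = Q η * G s ; F r = F s - Q ξ * (G s - G r)
  have hFs : F s = Q η * G s := by linarith [hηeq]
  have hFr : F r = Q η * G s - Q ξ * (G s - G r) := by linarith [hξeq, hFs]
  show F s / G s < F r / G r
  rw [div_lt_div_iff₀ hGs hGr, hFs, hFr]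
  nlinarith [mul_pos (mul_pos hGs (sub_pos.2 hQlt)) (sub_pos.2 hGrs)]

lemma aux_lim0 {k a b : ℝ} (hk : 1 < k) (ha0 : 0 < a) (ha1 : a < 1) (hb0 : 0 < b)
    (hb1 : b < 1) :
    Tendsto (fun r : ℝ =>
      Real.log (1 + (1 - r ^ k) / (r ^ k * a)) / Real.log (1 + (1 - r) / (r * b)))
      (𝓝[>] (0:ℝ)) (𝓝 k) := by
  have hk0 : (0:ℝ) < k := by linarith
  have hIoo : Ioo (0:ℝ) 1 ∈ 𝓝[>] (0:ℝ) :=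
    Ioo_mem_nhdsGT_of_mem ⟨le_refl 0, zero_lt_one⟩
  -- -log r → ∞
  have hlog : Tendsto (fun r : ℝ => -Real.log r) (𝓝[>] (0:ℝ)) atTop :=
    tendsto_neg_atBot_atTop.comp Real.tendsto_log_nhdsGT_zero
  have hinv : Tendsto (fun r : ℝ => (-Real.log r)⁻¹) (𝓝[>] (0:ℝ)) (𝓝 0) :=
    hlog.inv_tendsto_atTop
  -- r^k → 0
  have hrpow : Tendsto (fun r : ℝ => r ^ k) (𝓝[>] (0:ℝ)) (𝓝 0) := by
    have h := (Real.continuousAt_rpow_const 0 k (Or.inr (le_of_lt hk0))).tendsto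
    rw [Real.zero_rpow (ne_of_gt hk0)] at h
    exact h.mono_left nhdsWithin_le_nhds
  have hrid : Tendsto (fun r : ℝ => r) (𝓝[>] (0:ℝ)) (𝓝 0) :=
    tendsto_id.mono_left nhdsWithin_le_nhds
  -- numerator / (-log r) → k
  have hE : ∀ (c : ℝ) (g : ℝ → ℝ), Tendsto g (𝓝[>] (0:ℝ)) (𝓝 0) →
      Tendsto (fun r : ℝ => Real.log (1 - (1 - c) * g r)) (𝓝[>] (0:ℝ)) (𝓝 0) := by
    intro c g hg
    have h1 : Tendsto (fun r : ℝ => 1 - (1 - c) * g r) (𝓝[>] (0:ℝ)) (𝓝 1) := by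
      have := (tendsto_const_nhds (x := (1:ℝ))).sub ((tendsto_const_nhds (x := 1 - c)).mul hg)
      simpa using this
    have := h1.log one_ne_zero
    simpa using this
  have hFl : Tendsto (fun r : ℝ =>
      (Real.log (1 - (1 - a) * r ^ k) - Real.log a) * (-Real.log r)⁻¹ + k)
      (𝓝[>] (0:ℝ)) (𝓝 k) := by
    have h := (((hE a _ hrpow).sub_const (Real.log a)).mul hinv).add_const k
    simpa using h
  have hGl : Tendsto (fun r : ℝ =>
      (Real.log (1 - (1 - b) * r) - Real.log b) * (-Real.log r)⁻¹ + 1)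
      (𝓝[>] (0:ℝ)) (𝓝 1) := by
    have h := (((hE b _ hrid).sub_const (Real.log b)).mul hinv).add_const 1
    simpa using h
  have hdiv := hFl.div hGl one_ne_zero
  rw [div_one] at hdiv
  apply Tendsto.congr' _ hdiv
  filter_upwards [hIoo] with r hr
  have hlogr : Real.log r < 0 := Real.log_neg hr.1 hr.2
  have hEF : Real.log (1 + (1 - r ^ k) / (r ^ k * a)) =
      Real.log (1 - (1 - a) * r ^ k) - Real.log a - k * Real.log r :=
    aux_logform ha0 ha1 hk0 hr.1 (le_of_lt hr.2)
  have hEG : Real.log (1 + (1 - r) / (r * b)) =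
      Real.log (1 - (1 - b) * r) - Real.log b - 1 * Real.log r := by
    have := aux_logform hb0 hb1 one_pos hr.1 (le_of_lt hr.2)
    simpa [Real.rpow_one] using this
  have hne : -Real.log r ≠ 0 := by linarith
  have hne' : Real.log r ≠ 0 := ne_of_lt hlogr
  have h1 : (Real.log (1 - (1 - a) * r ^ k) - Real.log a) * (-Real.log r)⁻¹ + k =
      Real.log (1 + (1 - r ^ k) / (r ^ k * a)) * (-Real.log r)⁻¹ := by
    rw [hEF]; field_simp [hne']; ring
  have h2 : (Real.log (1 - (1 - b) * r) - Real.log b) * (-Real.log r)⁻¹ + 1 =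
      Real.log (1 + (1 - r) / (r * b)) * (-Real.log r)⁻¹ := by
    rw [hEG]; field_simp [hne']; ring
  simp only [Pi.div_apply]
  rw [h1, h2, mul_div_mul_right _ _ (inv_ne_zero hne)]

lemma aux_alg {L1 L2 U V : ℝ} (hU : U ≠ 0) (hV : V ≠ 0) (hL2 : L2 ≠ 0) :
    L1 / U * (U / V) / (L2 / V) = L1 / L2 := by
  field_simp

lemma aux_lim1 {k a b : ℝ} (hk : 1 < k) (ha0 : 0 < a) (ha1 : a < 1) (hb0 : 0 < b)
    (hb1 : b < 1) :
    Tendsto (fun r : ℝ =>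
      Real.log (1 + (1 - r ^ k) / (r ^ k * a)) / Real.log (1 + (1 - r) / (r * b)))
      (𝓝[<] (1:ℝ)) (𝓝 (k * b / a)) := by
  have hk0 : (0:ℝ) < k := by linarith
  have hIoo : Ioo (0:ℝ) 1 ∈ 𝓝[<] (1:ℝ) :=
    Ioo_mem_nhdsLT_of_mem ⟨zero_lt_one, le_refl 1⟩
  -- log(1+x)/x → 1 as x → 0 (within x ≠ 0)
  have hL : Tendsto (fun x : ℝ => Real.log (1 + x) / x) (𝓝[≠] (0:ℝ)) (𝓝 1) := by
    have hd : HasDerivAt (fun x : ℝ => Real.log (1 + x)) 1 0 := by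
      have h := (HasDerivAt.const_add 1 (hasDerivAt_id (0:ℝ))).log (by norm_num)
      simpa using h
    rw [hasDerivAt_iff_tendsto_slope] at hd
    apply Tendsto.congr _ hd
    intro x
    simp [slope_def_field]
  -- r^k → 1
  have hrpow : Tendsto (fun r : ℝ => r ^ k) (𝓝[<] (1:ℝ)) (𝓝 1) := by
    have h := (Real.continuousAt_rpow_const 1 k (Or.inl one_ne_zero)).tendsto
    rw [Real.one_rpow] at h
    exact h.mono_left nhdsWithin_le_nhds
  have hrid : Tendsto (fun r : ℝ => r) (𝓝[<] (1:ℝ)) (𝓝 1) :=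
    tendsto_id.mono_left nhdsWithin_le_nhds
  -- u → 0 within positives
  have hu0 : Tendsto (fun r : ℝ => (1 - r ^ k) / (r ^ k * a)) (𝓝[<] (1:ℝ)) (𝓝 0) := by
    have h := ((tendsto_const_nhds (x := (1:ℝ))).sub hrpow).div
      (hrpow.mul (tendsto_const_nhds (x := a))) (by simp [ne_of_gt ha0])
    simpa [Pi.div_def] using h
  have hu : Tendsto (fun r : ℝ => (1 - r ^ k) / (r ^ k * a)) (𝓝[<] (1:ℝ)) (𝓝[≠] (0:ℝ)) := by
    apply tendsto_nhdsWithin_of_tendsto_nhds_of_eventually_within _ hu0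
    filter_upwards [hIoo] with r hr
    have hx0 : 0 < r ^ k := Real.rpow_pos_of_pos hr.1 k
    have hx1 : r ^ k < 1 := Real.rpow_lt_one (le_of_lt hr.1) hr.2 hk0
    have : 0 < (1 - r ^ k) / (r ^ k * a) := div_pos (by linarith) (by positivity)
    exact ne_of_gt this
  have hv0 : Tendsto (fun r : ℝ => (1 - r) / (r * b)) (𝓝[<] (1:ℝ)) (𝓝 0) := by
    have h := ((tendsto_const_nhds (x := (1:ℝ))).sub hrid).div
      (hrid.mul (tendsto_const_nhds (x := b))) (by simp [ne_of_gt hb0])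
    simpa [Pi.div_def] using h
  have hv : Tendsto (fun r : ℝ => (1 - r) / (r * b)) (𝓝[<] (1:ℝ)) (𝓝[≠] (0:ℝ)) := by
    apply tendsto_nhdsWithin_of_tendsto_nhds_of_eventually_within _ hv0
    filter_upwards [hIoo] with r hr
    have : 0 < (1 - r) / (r * b) := div_pos (by linarith [hr.2]) (mul_pos hr.1 hb0)
    exact ne_of_gt this
  have hlogu : Tendsto (fun r : ℝ =>
      Real.log (1 + (1 - r ^ k) / (r ^ k * a)) / ((1 - r ^ k) / (r ^ k * a)))
      (𝓝[<] (1:ℝ)) (𝓝 1) := hL.comp hu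
  have hlogv : Tendsto (fun r : ℝ =>
      Real.log (1 + (1 - r) / (r * b)) / ((1 - r) / (r * b)))
      (𝓝[<] (1:ℝ)) (𝓝 1) := hL.comp hv
  -- (1 - r^k)/(1 - r) → k
  have hq : Tendsto (fun r : ℝ => (1 - r ^ k) / (1 - r)) (𝓝[<] (1:ℝ)) (𝓝 k) := by
    have hd : HasDerivAt (fun x : ℝ => x ^ k) k 1 := by
      have h := Real.hasDerivAt_rpow_const (x := (1:ℝ)) (p := k) (Or.inl one_ne_zero)
      simpa [Real.one_rpow] using h
    rw [hasDerivAt_iff_tendsto_slope] at hd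
    have hmono : 𝓝[<] (1:ℝ) ≤ 𝓝[≠] (1:ℝ) := nhdsWithin_mono _ (fun x hx => ne_of_lt hx)
    apply Tendsto.congr _ (hd.mono_left hmono)
    intro x
    rw [slope_def_field]
    rw [Real.one_rpow, ← neg_div_neg_eq]
    ring_nf
  -- (r b)/(r^k a) → b/a
  have hq2 : Tendsto (fun r : ℝ => r * b / (r ^ k * a)) (𝓝[<] (1:ℝ)) (𝓝 (b / a)) := by
    have h := (hrid.mul (tendsto_const_nhds (x := b))).div
      (hrpow.mul (tendsto_const_nhds (x := a))) (by simp [ne_of_gt ha0])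
    simpa [Pi.div_def] using h
  have hcomb := (hlogu.mul (hq.mul hq2)).div hlogv one_ne_zero
  have hval : (1 : ℝ) * (k * (b / a)) / 1 = k * b / a := by field_simp
  rw [hval] at hcomb
  apply Tendsto.congr' _ hcomb
  filter_upwards [hIoo] with r hr
  have hx0 : 0 < r ^ k := Real.rpow_pos_of_pos hr.1 k
  have hx1 : r ^ k < 1 := Real.rpow_lt_one (le_of_lt hr.1) hr.2 hk0
  have hu' : 0 < (1 - r ^ k) / (r ^ k * a) := div_pos (by linarith) (by positivity)
  have hv' : 0 < (1 - r) / (r * b) := div_pos (by linarith [hr.2]) (mul_pos hr.1 hb0)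
  have hlv : 0 < Real.log (1 + (1 - r) / (r * b)) := Real.log_pos (by linarith)
  simp only [Pi.div_apply]
  have hsplit : (1 - r ^ k) / (1 - r) * (r * b / (r ^ k * a)) =
      ((1 - r ^ k) / (r ^ k * a)) / ((1 - r) / (r * b)) := by
    rw [div_mul_div_comm, div_div_div_eq]
    ring_nf
  rw [hsplit]
  exact aux_alg (ne_of_gt hu') (ne_of_gt hv') (ne_of_gt hlv)

/-- For `k > 1` and `θ ∈ (0, π/(2k))`, the function
`f₃(r) = log(1 + (1 - r^k)/(r^k sin kθ)) / log(1 + (1 - r)/(r sin θ))` is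
strictly decreasing on `(0,1)`, tends to `k` as `r → 0⁺` and to
`k sin θ / sin kθ` as `r → 1⁻`. -/
theorem f3_strictAnti (k : ℝ) (hk : 1 < k) (θ : ℝ) (hθ : θ ∈ Set.Ioo 0 (π / (2 * k))) :
    StrictAntiOn (fun r : ℝ =>
        Real.log (1 + (1 - r ^ k) / (r ^ k * Real.sin (k * θ))) /
          Real.log (1 + (1 - r) / (r * Real.sin θ)))
      (Set.Ioo (0 : ℝ) 1) ∧
    Tendsto (fun r : ℝ =>
        Real.log (1 + (1 - r ^ k) / (r ^ k * Real.sin (k * θ))) /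
          Real.log (1 + (1 - r) / (r * Real.sin θ)))
      (𝓝[>] 0) (𝓝 k) ∧
    Tendsto (fun r : ℝ =>
        Real.log (1 + (1 - r ^ k) / (r ^ k * Real.sin (k * θ))) /
          Real.log (1 + (1 - r) / (r * Real.sin θ)))
      (𝓝[<] 1) (𝓝 (k * Real.sin θ / Real.sin (k * θ))) := by
  obtain ⟨hθ0, hθπ⟩ := hθ
  have hk0 : (0:ℝ) < k := by linarith
  have hπ := Real.pi_pos
  have hkθ2 : k * θ < π / 2 := by
    have h := mul_lt_mul_of_pos_left hθπ hk0
    rwa [show k * (π / (2 * k)) = π / 2 by field_simp] at h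
  have hkθ0 : 0 < k * θ := mul_pos hk0 hθ0
  have hθ2 : θ < π / 2 := by nlinarith
  have ha0 : 0 < Real.sin (k * θ) :=
    Real.sin_pos_of_pos_of_lt_pi hkθ0 (by linarith)
  have hb0 : 0 < Real.sin θ := Real.sin_pos_of_pos_of_lt_pi hθ0 (by linarith)
  have hca : 0 < Real.cos (k * θ) :=
    Real.cos_pos_of_mem_Ioo ⟨by linarith, hkθ2⟩
  have hcb : 0 < Real.cos θ := Real.cos_pos_of_mem_Ioo ⟨by linarith, hθ2⟩
  have ha1 : Real.sin (k * θ) < 1 := by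
    nlinarith [Real.sin_sq_add_cos_sq (k * θ)]
  have hb1 : Real.sin θ < 1 := by
    nlinarith [Real.sin_sq_add_cos_sq θ]
  have hKI : k * Real.sin θ ≤ Real.sin (k * θ) + (k - 1) * Real.sin (k * θ) * Real.sin θ := by
    nlinarith [aux_key hk hθ0 hkθ2]
  exact ⟨aux_main_anti hk ha0 ha1 hb0 hb1 (by nlinarith [hKI]),
    aux_lim0 hk ha0 ha1 hb0 hb1,
    aux_lim1 hk ha0 ha1 hb0 hb1⟩
end

section
/- Let k ≥ 1 be a real number and let x = s·e^{iθ}, y = t·e^{iθ} be two points in the angular sector S_{π/k} with the same argument θ ∈ (0, π/k), where s, t > 0. Let f send r·e^{iφ} to r^k·e^{ikφ} (so f maps S_{π/k} into ℍ²). Then (k sin θ′ / sin kθ′) · j_{S_{π/k}}(x, y) ≤ j_{ℍ²}(f(x), f(y)) ≤ k · j_{S_{π/k}}(x, y), where θ′ = min{θ, π/k − θ}. -/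
open Metric Real Filter Topology Set

/-- The distance ratio metric of a domain `G`:
`j_G(x,y) = log(1 + |x-y| / min(d(x,∂G), d(y,∂G)))`. -/
noncomputable def jdist {E : Type*} [PseudoMetricSpace E] (G : Set E) (x y : E) : ℝ :=
  Real.log (1 + dist x y /
    min (Metric.infDist x (frontier G)) (Metric.infDist y (frontier G)))


-- L3
lemma trigC' {u : ℝ} (h0 : 0 ≤ u) (h1 : u ≤ π/2) :
    Real.sin u * (1 - Real.sin u) ≤ u * Real.cos u := by
  have hs : 0 ≤ Real.sin u := Real.sin_nonneg_of_nonneg_of_le_pi h0 (by linarith [Real.pi_pos])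
  have hc : 0 ≤ Real.cos u := Real.cos_nonneg_of_mem_Icc ⟨by linarith, h1⟩
  have hsl : Real.sin u ≤ u := Real.sin_le h0
  have hpy : Real.sin u ^ 2 + Real.cos u ^ 2 = 1 := Real.sin_sq_add_cos_sq u
  have hs1 : Real.sin u ≤ 1 := Real.sin_le_one u
  have hc1 : Real.cos u ≤ 1 := Real.cos_le_one u
  nlinarith [mul_nonneg hs hc, sq_nonneg (Real.sin u - Real.cos u)]

-- L4 : T
lemma trigT {k x : ℝ} (hx : 0 < x) (hk : 1 ≤ k) (hkx : k * x ≤ π/2) :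
    k * Real.sin x * (1 - Real.sin (k*x)) ≤ Real.sin (k*x) * (1 - Real.sin x) := by
  have hsinpos : ∀ t ∈ Icc (1:ℝ) k, 0 < Real.sin (t*x) := by
    intro t ht
    apply Real.sin_pos_of_pos_of_lt_pi (by nlinarith [ht.1])
    have : t * x ≤ k * x := by nlinarith [ht.2]
    linarith [Real.pi_pos]
  set f : ℝ → ℝ := fun t => t - t / Real.sin (t*x) with hf
  have hderiv : ∀ t ∈ Icc (1:ℝ) k, HasDerivAt f
      (1 - (1 * Real.sin (t*x) - t * (Real.cos (t*x) * x)) / (Real.sin (t*x))^2) t := by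
    intro t ht
    have h1 : HasDerivAt (fun t : ℝ => t * x) x t := hasDerivAt_mul_const x
    have h2 : HasDerivAt (fun t : ℝ => Real.sin (t*x)) (Real.cos (t*x) * x) t :=
      h1.sin
    exact (hasDerivAt_id t).sub ((hasDerivAt_id t).div h2 (hsinpos t ht).ne')
  have hmono : MonotoneOn f (Icc 1 k) := by
    apply monotoneOn_of_hasDerivWithinAt_nonneg (convex_Icc 1 k)
      (fun t ht => (hderiv t ht).continuousAt.continuousWithinAt)
      (fun t ht => (hderiv t (interior_subset ht)).hasDerivWithinAt)
    intro t ht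
    rw [interior_Icc] at ht
    have ht' : t ∈ Icc (1:ℝ) k := ⟨ht.1.le, ht.2.le⟩
    have hsp := hsinpos t ht'
    have hu0 : 0 ≤ t * x := by nlinarith [ht.1]
    have hu1 : t * x ≤ π/2 := by nlinarith [ht.2.le]
    have hC := trigC' hu0 hu1
    have hsq : (0:ℝ) < (Real.sin (t*x))^2 := by positivity
    rw [sub_nonneg, div_le_one hsq]
    nlinarith
  have h01 : (1:ℝ) ∈ Icc (1:ℝ) k := ⟨le_refl 1, hk⟩
  have h0k : k ∈ Icc (1:ℝ) k := ⟨hk, le_refl k⟩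
  have := hmono h01 h0k hk
  simp only [hf] at this
  have hs1 : 0 < Real.sin (1*x) := hsinpos 1 h01
  have hsk : 0 < Real.sin (k*x) := hsinpos k h0k
  rw [one_mul] at hs1
  have key : 1 - 1 / Real.sin x ≤ k - k / Real.sin (k*x) := by simpa using this
  have h1 : k * Real.sin x - Real.sin (k*x) ≤ (k-1) * (Real.sin x * Real.sin (k*x)) := by
    have e1 : (1 - 1 / Real.sin x) * (Real.sin x * Real.sin (k*x)) =
        Real.sin x * Real.sin (k*x) - Real.sin (k*x) := by field_simp
    have e2 : (k - k / Real.sin (k*x)) * (Real.sin x * Real.sin (k*x)) =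
        k * (Real.sin x * Real.sin (k*x)) - k * Real.sin x := by field_simp
    nlinarith [mul_pos hs1 hsk]
  nlinarith

-- L1
lemma rpow_sub_one_le' {v p : ℝ} (hv : 1 ≤ v) (hp : 0 ≤ p) :
    v ^ p - 1 ≤ p * v ^ p * (v - 1) := by
  have hv0 : (0:ℝ) < v := by linarith
  have hvp1 : (1:ℝ) ≤ v ^ p := Real.one_le_rpow hv hp
  rcases le_or_gt p 1 with hp1 | hp1
  · have h := rpow_one_add_le_one_add_mul_self (s := v - 1) (by linarith) hp hp1
    rw [show (1:ℝ) + (v-1) = v by ring] at h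
    nlinarith
  · have h := one_add_mul_self_le_rpow_one_add (s := 1/v - 1) (by
      have : 0 < 1/v := by positivity
      linarith) hp1.le
    rw [show (1:ℝ) + (1/v - 1) = 1/v by ring] at h
    rw [Real.div_rpow zero_le_one hv0.le, Real.one_rpow] at h
    -- h : 1 + p*(1/v-1) ≤ 1 / v^p
    have hvp0 : (0:ℝ) < v ^ p := by positivity
    have h2 : v ^ p * (1 + p*(1/v - 1)) ≤ 1 := by
      calc v ^ p * (1 + p*(1/v-1)) ≤ v ^ p * (1 / v^p) := by
            exact mul_le_mul_of_nonneg_left h hvp0.le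
        _ = 1 := by field_simp
    have h3 : v ^ p * (1/v) = v ^ p / v := by ring
    have hdiv : v ^ p / v ≤ v ^ p := by
      rw [div_le_iff₀ hv0]; nlinarith
    have hexp : v ^ p + p * (v^p/v) - p * v^p ≤ 1 := by
      have : v ^ p * (1 + p*(1/v-1)) = v ^ p + p * (v^p/v) - p * v^p := by ring
      linarith [h2, this.symm.le]
    set w := v ^ p / v with hwdef
    have hw0 : 0 ≤ w := by positivity
    have hwv : w * v = v ^ p := div_mul_cancel₀ _ hv0.ne'
    -- hexp : v^p - 1 ≤ p * (v^p - w) = p * w * (v-1)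
    have h4 : v ^ p - 1 ≤ p * w * (v - 1) := by nlinarith
    have h5 : p * w * (v-1) ≤ p * (w*v) * (v-1) := by nlinarith
    rw [hwv] at h5
    linarith

-- L2
lemma convex_pow_aux {a s k : ℝ} (ha : 0 ≤ a) (hs0 : 0 ≤ s) (hs1 : s ≤ 1) (hk : 1 ≤ k) :
    (1 + a * s) ^ k ≤ 1 + s * ((1 + a) ^ k - 1) := by
  have h := (convexOn_rpow hk).2 (Set.mem_Ici.2 (zero_le_one)) 
    (Set.mem_Ici.2 (by linarith : (0:ℝ) ≤ 1 + a)) (by linarith : (0:ℝ) ≤ 1 - s) hs0 (by ring)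
  simp only [smul_eq_mul, Real.one_rpow] at h
  have e : (1 - s) * 1 + s * (1 + a) = 1 + a * s := by ring
  rw [e] at h
  linarith

-- L6 core upper
lemma core_upper {s S k u : ℝ} (hs : 0 < s) (hs1 : s ≤ 1) (hsS : s ≤ S) (hk : 1 ≤ k) (hu : 1 ≤ u) :
    Real.log (1 + (u ^ k - 1) / S) ≤ k * Real.log (1 + (u - 1) / s) := by
  have hS : 0 < S := lt_of_lt_of_le hs hsS
  have hu0 : 0 < u := by linarith
  have huk : 1 ≤ u ^ k := Real.one_le_rpow hu (by linarith)
  set a := (u - 1) / s with hadef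
  have ha : 0 ≤ a := div_nonneg (by linarith) hs.le
  have has : a * s = u - 1 := div_mul_cancel₀ _ hs.ne'
  have h2 : u ^ k ≤ 1 + s * ((1 + a) ^ k - 1) := by
    have := convex_pow_aux ha hs.le hs1 hk
    rwa [has, show (1:ℝ) + (u - 1) = u by ring] at this
  have step1 : (u ^ k - 1) / S ≤ (u ^ k - 1) / s :=
    div_le_div_of_nonneg_left (by linarith) hs hsS
  have step2 : 1 + (u ^ k - 1) / s ≤ (1 + a) ^ k := by
    have h3 : (u ^ k - 1) / s ≤ (1 + a) ^ k - 1 := by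
      rw [div_le_iff₀ hs]; nlinarith
    linarith
  have hpos : 0 < 1 + (u ^ k - 1) / S := by
    have := div_nonneg (by linarith : (0:ℝ) ≤ u ^ k - 1) hS.le; linarith
  calc Real.log (1 + (u ^ k - 1) / S) ≤ Real.log ((1 + a) ^ k) :=
        Real.log_le_log hpos (by linarith)
    _ = k * Real.log (1 + a) := Real.log_rpow (by linarith) k

-- L5 core lower
lemma core_lower {s S k u : ℝ} (hs : 0 < s) (hsS : s ≤ S) (hS1 : S ≤ 1) (hk : 1 ≤ k)
    (hu : 1 ≤ u) (hT : k * s * (1 - S) ≤ S * (1 - s)) :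
    k * s * Real.log (1 + (u - 1) / s) ≤ S * Real.log (1 + (u ^ k - 1) / S) := by
  have hS : 0 < S := lt_of_lt_of_le hs hsS
  set F : ℝ → ℝ := fun a => S * Real.log (S - 1 + (1 + a * s) ^ k) - k * s * Real.log (1 + a)
    with hF
  -- derivative facts
  have hderiv : ∀ a : ℝ, 0 ≤ a → HasDerivAt F
      (S * ((k * (1 + a * s) ^ (k - 1) * s) / (S - 1 + (1 + a * s) ^ k))
        - k * s * (1 / (1 + a))) a := by
    intro a ha
    have hv1 : (1:ℝ) ≤ 1 + a * s := by nlinarith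
    have hv0 : (0:ℝ) < 1 + a * s := by linarith
    have hvk1 : (1:ℝ) ≤ (1 + a * s) ^ k := Real.one_le_rpow hv1 (by linarith)
    have hD : (0:ℝ) < S - 1 + (1 + a * s) ^ k := by linarith
    have haff : HasDerivAt (fun a : ℝ => 1 + a * s) s a := by
      simpa using (hasDerivAt_mul_const s).const_add 1
    have hpow : HasDerivAt (fun a : ℝ => (1 + a * s) ^ k)
        (k * (1 + a * s) ^ (k - 1) * s) a := by
      have := haff.rpow_const (p := k) (Or.inl hv0.ne')
      convert this using 1
      ring
    have hlog1 : HasDerivAt (fun a : ℝ => Real.log (S - 1 + (1 + a * s) ^ k))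
        ((k * (1 + a * s) ^ (k - 1) * s) / (S - 1 + (1 + a * s) ^ k)) a :=
      (hpow.const_add (S - 1)).log hD.ne'
    have hlog2 : HasDerivAt (fun a : ℝ => Real.log (1 + a)) (1 / (1 + a)) a := by
      have : HasDerivAt (fun a : ℝ => 1 + a) 1 a := by simpa using (hasDerivAt_id a).const_add 1
      simpa using this.log (by linarith : (1:ℝ) + a ≠ 0)
    exact (hlog1.const_mul S).sub (hlog2.const_mul (k * s))
  have hdnn : ∀ a : ℝ, 0 ≤ a →
      0 ≤ S * ((k * (1 + a * s) ^ (k - 1) * s) / (S - 1 + (1 + a * s) ^ k))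
        - k * s * (1 / (1 + a)) := by
    intro a ha
    set v := 1 + a * s with hv
    have hv1 : (1:ℝ) ≤ v := by nlinarith
    have hv0 : (0:ℝ) < v := by linarith
    have hvk1 : (1:ℝ) ≤ v ^ k := Real.one_le_rpow hv1 (by linarith)
    have hvk1' : (1:ℝ) ≤ v ^ (k-1) := Real.one_le_rpow hv1 (by linarith)
    have hD : (0:ℝ) < S - 1 + v ^ k := by linarith
    have ha1 : (0:ℝ) < 1 + a := by linarith
    -- key pointwise inequality P : S - 1 + v^k ≤ S * (1+a) * v^(k-1)
    have hsplit : v ^ k = v ^ (k-1) * v := by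
      rw [← Real.rpow_add_one hv0.ne' (k-1)]; ring_nf
    have hB : v ^ (k-1) - 1 ≤ (k-1) * v ^ (k-1) * (v - 1) := rpow_sub_one_le' hv1 (by linarith)
    have hvm1 : v - 1 = a * s := by rw [hv]; ring
    have hTk : (1 - S) * ((k-1) * s) ≤ S - s := by nlinarith
    have hP : S - 1 + v ^ k ≤ S * (1 + a) * v ^ (k-1) := by
      have e1 : S * (1 + a) * v ^ (k-1) - v ^ k = v ^ (k-1) * ((S - 1) + a * (S - s)) := by
        rw [hsplit, hv]; ring
      have h2 : (1 - S) * (v ^ (k-1) - 1) ≤ a * (S - s) * v ^ (k-1) := by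
        have hb2 : (1 - S) * (v ^ (k-1) - 1) ≤ (1 - S) * ((k-1) * v ^ (k-1) * (v-1)) := by
          nlinarith
        have hb3 : (1 - S) * ((k-1) * v ^ (k-1) * (v-1)) = ((1-S) * ((k-1)*s)) * (a * v ^ (k-1)) := by
          rw [hvm1]; ring
        have hb4 : ((1-S) * ((k-1)*s)) * (a * v ^ (k-1)) ≤ (S - s) * (a * v ^ (k-1)) := by
          have : (0:ℝ) ≤ a * v ^ (k-1) := by positivity
          exact mul_le_mul_of_nonneg_right hTk this
        nlinarith
      nlinarith
    -- conclude
    have hks : 0 < k * s := by positivity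
    rw [sub_nonneg, mul_one_div, ← mul_div_assoc, div_le_div_iff₀ ha1 hD]
    nlinarith [mul_le_mul_of_nonneg_left hP hks.le]
  -- monotonicity on Ici 0
  have hmono : MonotoneOn F (Ici 0) := by
    apply monotoneOn_of_hasDerivWithinAt_nonneg (convex_Ici 0)
      (fun a ha => (hderiv a ha).continuousAt.continuousWithinAt)
      (fun a ha => (hderiv a (le_of_lt (by rwa [interior_Ici] at ha))).hasDerivWithinAt)
    intro a ha
    rw [interior_Ici] at ha
    exact hdnn a ha.le
  -- apply at a = (u-1)/s
  set a := (u - 1) / s with hadef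
  have ha : 0 ≤ a := div_nonneg (by linarith) hs.le
  have has : a * s = u - 1 := div_mul_cancel₀ _ hs.ne'
  have hmain := hmono (self_mem_Ici) (Set.mem_Ici.2 ha) ha
  simp only [hF] at hmain
  rw [show (1:ℝ) + 0 * s = 1 by ring, show (1:ℝ) + 0 = 1 by ring, Real.one_rpow,
    Real.log_one, show S - 1 + 1 = S by ring, has, show (1:ℝ) + (u-1) = u by ring] at hmain
  -- hmain : S * log S - 0 ≤ S * log (S - 1 + u^k) - k*s*log(1+a)
  have huk : 1 ≤ u ^ k := Real.one_le_rpow hu (by linarith)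
  have hlogeq : Real.log (1 + (u ^ k - 1) / S) = Real.log (S - 1 + u ^ k) - Real.log S := by
    rw [← Real.log_div (by linarith) hS.ne']
    congr 1
    field_simp
    ring
  rw [hlogeq, mul_sub]
  linarith [hmain]

open Complex in
lemma im_ofReal_mul_exp (r x : ℝ) : ((r:ℂ) * Complex.exp ((x:ℂ) * Complex.I)).im = r * Real.sin x := by
  simp [Complex.mul_im, Complex.exp_ofReal_mul_I_re, Complex.exp_ofReal_mul_I_im]

lemma abs_ofReal_mul_exp (r x : ℝ) : ‖(r:ℂ) * Complex.exp ((x:ℂ) * Complex.I)‖ = |r| := by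
  rw [norm_mul, Complex.norm_exp_ofReal_mul_I, Complex.norm_real, Real.norm_eq_abs, mul_one]

lemma exp_mul_exp_I (r x y : ℝ) :
    (r:ℂ) * Complex.exp ((x:ℂ) * Complex.I) * Complex.exp ((y:ℂ) * Complex.I)
      = (r:ℂ) * Complex.exp (((x+y : ℝ):ℂ) * Complex.I) := by
  rw [mul_assoc, ← Complex.exp_add]
  push_cast
  ring_nf

-- helper for le_infDist
lemma le_infDist_aux {x : ℂ} {S : Set ℂ} (hS : S.Nonempty) {d : ℝ}
    (h : ∀ z ∈ S, d ≤ dist x z) : d ≤ Metric.infDist x S := by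
  by_contra h'
  push_neg at h'
  obtain ⟨z, hz, hdz⟩ := (Metric.infDist_lt_iff hS).1 h'
  exact absurd (h z hz) (by linarith)

lemma mem_closure_wedge {c₁ c₂ x z₀ : ℂ} (h1 : 0 < (x*c₁).im) (h2 : (x*c₂).im < 0)
    (h3 : 0 ≤ (z₀*c₁).im) (h4 : (z₀*c₂).im ≤ 0) :
    z₀ ∈ closure {z : ℂ | 0 < (z*c₁).im ∧ (z*c₂).im < 0} := by
  have key : ∀ t : ℝ, 0 < t → t ≤ 1 →
      z₀ + t • (x - z₀) ∈ {z : ℂ | 0 < (z*c₁).im ∧ (z*c₂).im < 0} := by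
    intro t ht0 ht1
    have e : ∀ c : ℂ, ((z₀ + t • (x - z₀)) * c).im
        = (1-t) * (z₀*c).im + t * (x*c).im := by
      intro c
      have h : (z₀ + t • (x - z₀)) * c = z₀*c + (t:ℂ) * (x*c - z₀*c) := by
        rw [Complex.real_smul]; ring
      rw [h]
      simp [Complex.add_im, Complex.mul_im, Complex.sub_im, Complex.sub_re]
      ring
    constructor
    · show 0 < _
      rw [e c₁]
      nlinarith
    · show _ < (0:ℝ)
      rw [e c₂]
      nlinarith
  have htend : Filter.Tendsto (fun n : ℕ => z₀ + (1/(n+1) : ℝ) • (x - z₀))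
      Filter.atTop (nhds z₀) := by
    have h0 : Filter.Tendsto (fun n : ℕ => (1/(n+1) : ℝ)) Filter.atTop (nhds 0) :=
      tendsto_one_div_add_atTop_nhds_zero_nat
    have := (h0.smul_const (x - z₀)).const_add z₀
    simpa using this
  refine mem_closure_of_tendsto htend (Filter.Eventually.of_forall fun n => ?_)
  have hn : (0:ℝ) < 1/(n+1 : ℝ) := by positivity
  have hn1 : (1/(n+1 : ℝ)) ≤ 1 := by
    rw [div_le_one (by positivity)]
    simp [Nat.cast_nonneg]
  exact key _ hn hn1

-- half plane infDist
lemma infDist_halfplane {w : ℂ} (hw : 0 < w.im) :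
    Metric.infDist w (frontier {z : ℂ | 0 < z.im}) = w.im := by
  rw [Complex.frontier_setOf_lt_im]
  apply le_antisymm
  · have hmem : ((w.re : ℝ) : ℂ) ∈ {z : ℂ | z.im = 0} := by simp
    refine le_trans (Metric.infDist_le_dist_of_mem hmem) ?_
    rw [Complex.dist_eq]
    have : w - ((w.re : ℝ) : ℂ) = ((w.im : ℝ) : ℂ) * Complex.I := by
      apply Complex.ext <;> simp
    rw [this, norm_mul, Complex.norm_I, Complex.norm_real, Real.norm_eq_abs, mul_one, abs_of_pos hw]
  · apply le_infDist_aux ⟨0, by simp⟩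
    intro z hz
    rw [Set.mem_setOf_eq] at hz
    have := Complex.abs_im_le_norm (w - z)
    rw [Complex.sub_im, hz, sub_zero] at this
    rw [Complex.dist_eq]
    calc w.im ≤ |w.im| := le_abs_self _
      _ ≤ ‖w - z‖ := this

lemma sin_le_sin_aux {α β : ℝ} (h0 : 0 ≤ α) (hαβ : α ≤ β) (hβ : β ≤ π - α) :
    Real.sin α ≤ Real.sin β := by
  have hπ := Real.pi_pos
  rcases le_or_gt β (π/2) with h | h
  · exact Real.strictMonoOn_sin.monotoneOn ⟨by linarith, by linarith⟩ ⟨by linarith, h⟩ hαβ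
  · rw [← Real.sin_pi_sub β]
    exact Real.strictMonoOn_sin.monotoneOn ⟨by linarith, by linarith⟩
      ⟨by linarith, by linarith⟩ (by linarith)

lemma sector_eq_wedge {φ₀ : ℝ} (hφ0 : 0 < φ₀) (hφπ : φ₀ ≤ π) :
    {z : ℂ | 0 < Complex.arg z ∧ Complex.arg z < φ₀}
      = {z : ℂ | 0 < (z * 1).im} ∩
        {z : ℂ | (z * Complex.exp (((-φ₀ : ℝ):ℂ) * Complex.I)).im < 0} := by
  ext z
  simp only [Set.mem_setOf_eq, Set.mem_inter_iff, mul_one]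
  constructor
  · rintro ⟨h1, h2⟩
    have hz : z ≠ 0 := by
      intro h; rw [h, Complex.arg_zero] at h1; exact lt_irrefl 0 h1
    have habs : 0 < ‖z‖ := norm_pos_iff.mpr hz
    constructor
    · rw [← Complex.norm_mul_sin_arg z]
      exact mul_pos habs (Real.sin_pos_of_pos_of_lt_pi h1 (lt_of_lt_of_le h2 hφπ))
    · have hz' : z * Complex.exp (((-φ₀ : ℝ):ℂ) * Complex.I)
          = ((‖z‖ : ℝ):ℂ) * Complex.exp (((Complex.arg z + -φ₀ : ℝ):ℂ) * Complex.I) := by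
        conv_lhs => rw [← Complex.norm_mul_exp_arg_mul_I z]
        exact_mod_cast exp_mul_exp_I ‖z‖ (Complex.arg z) (-φ₀)
      rw [hz', im_ofReal_mul_exp]
      apply mul_neg_of_pos_of_neg habs
      apply Real.sin_neg_of_neg_of_neg_pi_lt (by linarith)
      linarith
  · rintro ⟨h1, h2⟩
    have hz : z ≠ 0 := by
      intro h; rw [h] at h1; simp at h1
    have habs : 0 < ‖z‖ := norm_pos_iff.mpr hz
    have hsin : 0 < Real.sin (Complex.arg z) := by
      rw [Complex.sin_arg]; exact div_pos h1 habs
    have harg1 : 0 < Complex.arg z := by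
      by_contra h
      push_neg at h
      have := Real.sin_nonpos_of_nonpos_of_neg_pi_le h (Complex.neg_pi_lt_arg z).le
      linarith
    have hz' : z * Complex.exp (((-φ₀ : ℝ):ℂ) * Complex.I)
        = ((‖z‖ : ℝ):ℂ) * Complex.exp (((Complex.arg z + -φ₀ : ℝ):ℂ) * Complex.I) := by
      conv_lhs => rw [← Complex.norm_mul_exp_arg_mul_I z]
      exact_mod_cast exp_mul_exp_I ‖z‖ (Complex.arg z) (-φ₀)
    rw [hz', im_ofReal_mul_exp] at h2
    have hsin2 : Real.sin (Complex.arg z + -φ₀) < 0 := by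
      by_contra h
      push_neg at h
      nlinarith
    refine ⟨harg1, ?_⟩
    by_contra h
    push_neg at h
    have h0 : 0 ≤ Complex.arg z + -φ₀ := by linarith
    have hπ : Complex.arg z + -φ₀ ≤ π := by
      linarith [Complex.arg_le_pi z]
    linarith [Real.sin_nonneg_of_nonneg_of_le_pi h0 hπ]

lemma re_ofReal_mul_exp (r x : ℝ) : ((r:ℂ) * Complex.exp ((x:ℂ) * Complex.I)).re = r * Real.cos x := by
  simp [Complex.mul_re, Complex.exp_ofReal_mul_I_re, Complex.exp_ofReal_mul_I_im]

lemma infDist_sector {φ₀ θ s : ℝ} (hφ0 : 0 < φ₀) (hφπ : φ₀ ≤ π) (hθ0 : 0 < θ)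
    (hθφ : θ < φ₀) (hs : 0 < s) :
    Metric.infDist ((s:ℂ) * Complex.exp ((θ:ℝ) * Complex.I))
      (frontier {z : ℂ | 0 < Complex.arg z ∧ Complex.arg z < φ₀})
      = s * Real.sin (min θ (φ₀ - θ)) := by
  have hπ := Real.pi_pos
  set c₂ : ℂ := Complex.exp (((-φ₀ : ℝ):ℂ) * Complex.I) with hc₂
  set A : Set ℂ := {z : ℂ | 0 < (z * 1).im} with hA
  set B : Set ℂ := {z : ℂ | (z * c₂).im < 0} with hB
  have hGW : {z : ℂ | 0 < Complex.arg z ∧ Complex.arg z < φ₀} = A ∩ B :=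
    sector_eq_wedge hφ0 hφπ
  have hWopen : IsOpen (A ∩ B) := by
    apply IsOpen.inter
    · exact isOpen_lt continuous_const (Complex.continuous_im.comp (continuous_mul_right 1))
    · exact isOpen_lt (Complex.continuous_im.comp (continuous_mul_right c₂)) continuous_const
  set x : ℂ := (s:ℂ) * Complex.exp ((θ:ℝ) * Complex.I) with hx
  -- basic values
  have hxim : (x * 1).im = s * Real.sin θ := by rw [mul_one, hx, im_ofReal_mul_exp]
  have hxim' : x.im = s * Real.sin θ := by rw [← mul_one x]; exact hxim
  have hxc₂ : (x * c₂).im = s * Real.sin (θ - φ₀) := by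
    rw [hx, hc₂, exp_mul_exp_I, show θ + -φ₀ = θ - φ₀ by ring, im_ofReal_mul_exp]
  have hsinθ : 0 < Real.sin θ := Real.sin_pos_of_pos_of_lt_pi hθ0 (by linarith)
  have hsinθφ : 0 < Real.sin (φ₀ - θ) :=
    Real.sin_pos_of_pos_of_lt_pi (by linarith) (by linarith)
  have hx1 : 0 < (x * 1).im := by rw [hxim]; positivity
  have hx2 : (x * c₂).im < 0 := by
    rw [hxc₂, show θ - φ₀ = -(φ₀ - θ) by ring, Real.sin_neg]
    nlinarith
  -- closure bound
  have hclos : closure (A ∩ B) ⊆ {z : ℂ | 0 ≤ (z * 1).im} ∩ {z : ℂ | (z * c₂).im ≤ 0} := by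
    apply closure_minimal
    · intro z hz
      simp only [hA, hB, Set.mem_inter_iff, Set.mem_setOf_eq] at hz ⊢
      exact ⟨hz.1.le, hz.2.le⟩
    · apply IsClosed.inter
      · exact isClosed_le continuous_const (Complex.continuous_im.comp (continuous_mul_right 1))
      · exact isClosed_le (Complex.continuous_im.comp (continuous_mul_right c₂)) continuous_const
  have hfr : frontier (A ∩ B) = closure (A ∩ B) \ (A ∩ B) := hWopen.frontier_eq
  -- min facts
  set θ' := min θ (φ₀ - θ) with hθ'
  have hθ'1 : θ' ≤ θ := min_le_left _ _
  have hθ'2 : θ' ≤ φ₀ - θ := min_le_right _ _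
  have hθ'0 : 0 < θ' := lt_min hθ0 (by linarith)
  have hsin1 : Real.sin θ' ≤ Real.sin θ := sin_le_sin_aux hθ'0.le hθ'1 (by
    rcases min_cases θ (φ₀ - θ) with ⟨h, _⟩ | ⟨h, _⟩ <;> rw [hθ', h] <;> linarith)
  have hsin2 : Real.sin θ' ≤ Real.sin (φ₀ - θ) := sin_le_sin_aux hθ'0.le hθ'2 (by linarith)
  -- lower bound
  have hlow : ∀ z ∈ frontier (A ∩ B), s * Real.sin θ' ≤ dist x z := by
    intro z hz
    rw [hfr] at hz
    obtain ⟨hzc, hznm⟩ := hz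
    have hzc' := hclos hzc
    simp only [Set.mem_inter_iff, Set.mem_setOf_eq] at hzc'
    have hcase : (z * 1).im = 0 ∨ (z * c₂).im = 0 := by
      by_contra h
      push_neg at h
      refine hznm ⟨?_, ?_⟩
      · show 0 < (z * 1).im
        exact lt_of_le_of_ne hzc'.1 (Ne.symm h.1)
      · show (z * c₂).im < 0
        exact lt_of_le_of_ne hzc'.2 h.2
    rcases hcase with h | h
    · rw [mul_one] at h
      have him : (x - z).im = s * Real.sin θ := by
        rw [Complex.sub_im, h, sub_zero, hxim']
      have hle := Complex.abs_im_le_norm (x - z)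
      rw [him] at hle
      rw [Complex.dist_eq]
      have h1 : s * Real.sin θ' ≤ s * Real.sin θ := by nlinarith
      calc s * Real.sin θ' ≤ s * Real.sin θ := h1
        _ ≤ |s * Real.sin θ| := le_abs_self _
        _ ≤ ‖x - z‖ := hle
    · have habs : ‖x - z‖ = ‖(x - z) * c₂‖ := by
        rw [norm_mul, hc₂, Complex.norm_exp_ofReal_mul_I, mul_one]
      have him : ((x - z) * c₂).im = s * Real.sin (θ - φ₀) := by
        rw [sub_mul, Complex.sub_im, h, sub_zero, hxc₂]
      have hle := Complex.abs_im_le_norm ((x - z) * c₂)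
      rw [him] at hle
      rw [Complex.dist_eq, habs]
      have heq : |s * Real.sin (θ - φ₀)| = s * Real.sin (φ₀ - θ) := by
        rw [show θ - φ₀ = -(φ₀ - θ) by ring, Real.sin_neg, mul_neg, abs_neg,
          abs_of_pos (by positivity)]
      rw [heq] at hle
      have h1 : s * Real.sin θ' ≤ s * Real.sin (φ₀ - θ) := by nlinarith
      linarith
  -- upper bound: frontier point z₀
  rw [hGW]
  rcases le_or_gt θ (φ₀ - θ) with hc | hc
  · -- θ' = θ, closest point on real axis
    have hθ'eq : θ' = θ := by rw [hθ']; exact min_eq_left hc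
    have hθπ2 : θ ≤ π/2 := by linarith
    have hcos : 0 ≤ Real.cos θ := Real.cos_nonneg_of_mem_Icc ⟨by linarith, hθπ2⟩
    have hsφ : 0 ≤ Real.sin φ₀ := Real.sin_nonneg_of_nonneg_of_le_pi hφ0.le hφπ
    set z₀ : ℂ := ((s * Real.cos θ : ℝ):ℂ) with hz₀
    have hz₀1 : (z₀ * 1).im = 0 := by rw [mul_one, hz₀, Complex.ofReal_im]
    have hz₀2 : (z₀ * c₂).im ≤ 0 := by
      rw [hz₀, hc₂, im_ofReal_mul_exp, Real.sin_neg]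
      nlinarith [mul_nonneg (mul_nonneg hs.le hcos) hsφ]
    have hz₀f : z₀ ∈ frontier (A ∩ B) := by
      rw [hfr]
      constructor
      · exact mem_closure_wedge hx1 hx2 (le_of_eq hz₀1.symm) hz₀2
      · rintro ⟨h1, _⟩
        have h1' : 0 < (z₀ * 1).im := h1
        rw [hz₀1] at h1'
        exact lt_irrefl 0 h1'
    have hdist : dist x z₀ = s * Real.sin θ := by
      have hsub : x - z₀ = ((s * Real.sin θ : ℝ):ℂ) * Complex.I := by
        apply Complex.ext
        · rw [Complex.sub_re, hx, re_ofReal_mul_exp, hz₀, Complex.ofReal_re]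
          simp [Complex.mul_re, Complex.mul_im, Complex.sin_ofReal_re, Complex.cos_ofReal_re, Complex.sin_ofReal_im, Complex.cos_ofReal_im, ← Complex.ofReal_sub]
        · rw [Complex.sub_im, hx, im_ofReal_mul_exp, hz₀, Complex.ofReal_im]
          simp [Complex.mul_re, Complex.mul_im, Complex.sin_ofReal_re, Complex.cos_ofReal_re, Complex.sin_ofReal_im, Complex.cos_ofReal_im, ← Complex.ofReal_sub]
      rw [Complex.dist_eq, hsub, norm_mul, Complex.norm_I, Complex.norm_real, Real.norm_eq_abs, mul_one,
        abs_of_pos (by positivity)]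
    rw [hθ'eq] at hlow ⊢
    apply le_antisymm
    · rw [← hdist]
      exact Metric.infDist_le_dist_of_mem hz₀f
    · exact le_infDist_aux ⟨z₀, hz₀f⟩ hlow
  · -- θ' = φ₀ - θ
    have hθ'eq : θ' = φ₀ - θ := by rw [hθ']; exact min_eq_right hc.le
    have hψ0 : 0 < φ₀ - θ := by linarith
    have hψπ2 : φ₀ - θ ≤ π/2 := by linarith
    have hcos : 0 ≤ Real.cos (φ₀ - θ) := Real.cos_nonneg_of_mem_Icc ⟨by linarith, hψπ2⟩
    have hsφ : 0 ≤ Real.sin φ₀ := Real.sin_nonneg_of_nonneg_of_le_pi hφ0.le hφπ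
    set z₀ : ℂ := ((s * Real.cos (φ₀ - θ) : ℝ):ℂ) * Complex.exp ((φ₀:ℝ) * Complex.I) with hz₀
    have hz₀1 : 0 ≤ (z₀ * 1).im := by
      rw [mul_one, hz₀, im_ofReal_mul_exp]
      positivity
    have hz₀c : z₀ * c₂ = ((s * Real.cos (φ₀ - θ) : ℝ):ℂ) := by
      rw [hz₀, hc₂, exp_mul_exp_I, show φ₀ + -φ₀ = 0 by ring]
      norm_num
    have hz₀2 : (z₀ * c₂).im = 0 := by rw [hz₀c, Complex.ofReal_im]
    have hz₀f : z₀ ∈ frontier (A ∩ B) := by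
      rw [hfr]
      constructor
      · exact mem_closure_wedge hx1 hx2 hz₀1 (le_of_eq hz₀2)
      · rintro ⟨_, h2⟩
        have h2' : (z₀ * c₂).im < 0 := h2
        rw [hz₀2] at h2'
        exact lt_irrefl 0 h2'
    have hdist : dist x z₀ = s * Real.sin (φ₀ - θ) := by
      have habs2 : ‖x - z₀‖ = ‖(x - z₀) * c₂‖ := by
        rw [norm_mul, hc₂, Complex.norm_exp_ofReal_mul_I, mul_one]
      have hxc : x * c₂ = (s:ℂ) * Complex.exp (((θ - φ₀ : ℝ):ℂ) * Complex.I) := by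
        rw [hx, hc₂, exp_mul_exp_I, show θ + -φ₀ = θ - φ₀ by ring]
      have hsub : (x - z₀) * c₂ = ((-(s * Real.sin (φ₀ - θ)) : ℝ):ℂ) * Complex.I := by
        rw [sub_mul, hxc, hz₀c]
        apply Complex.ext
        · rw [Complex.sub_re, re_ofReal_mul_exp, Complex.ofReal_re,
            show θ - φ₀ = -(φ₀ - θ) by ring, Real.cos_neg]
          simp [Complex.mul_re, Complex.mul_im, Complex.sin_ofReal_re, Complex.cos_ofReal_re, Complex.sin_ofReal_im, Complex.cos_ofReal_im, ← Complex.ofReal_sub]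
        · rw [Complex.sub_im, im_ofReal_mul_exp, Complex.ofReal_im,
            show θ - φ₀ = -(φ₀ - θ) by ring, Real.sin_neg]
          simp [Complex.mul_re, Complex.mul_im, Complex.sin_ofReal_re, Complex.cos_ofReal_re, Complex.sin_ofReal_im, Complex.cos_ofReal_im, ← Complex.ofReal_sub]
      rw [Complex.dist_eq, habs2, hsub, norm_mul, Complex.norm_I, Complex.norm_real, Real.norm_eq_abs, mul_one,
        abs_neg, abs_of_pos (by positivity)]
    rw [hθ'eq] at hlow ⊢
    apply le_antisymm
    · rw [← hdist]
      exact Metric.infDist_le_dist_of_mem hz₀f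
    · exact le_infDist_aux ⟨z₀, hz₀f⟩ hlow

lemma jdist_comm {E : Type*} [PseudoMetricSpace E] (G : Set E) (x y : E) :
    jdist G x y = jdist G y x := by
  unfold jdist
  rw [dist_comm, min_comm]

set_option maxHeartbeats 1000000 in
lemma main_ordered (k : ℝ) (hk : 1 ≤ k) (θ s t : ℝ)
    (hθ : θ ∈ Set.Ioo 0 (π / k)) (hs : 0 < s) (ht : 0 < t) (hst : s ≤ t) :
    (k * Real.sin (min θ (π / k - θ)) / Real.sin (k * min θ (π / k - θ))) *
        jdist {z : ℂ | 0 < Complex.arg z ∧ Complex.arg z < π / k}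
          ((s : ℂ) * Complex.exp (θ * Complex.I)) ((t : ℂ) * Complex.exp (θ * Complex.I)) ≤
      jdist {z : ℂ | 0 < z.im}
        (((s ^ k : ℝ) : ℂ) * Complex.exp ((k * θ : ℝ) * Complex.I))
        (((t ^ k : ℝ) : ℂ) * Complex.exp ((k * θ : ℝ) * Complex.I)) ∧
    jdist {z : ℂ | 0 < z.im}
        (((s ^ k : ℝ) : ℂ) * Complex.exp ((k * θ : ℝ) * Complex.I))
        (((t ^ k : ℝ) : ℂ) * Complex.exp ((k * θ : ℝ) * Complex.I)) ≤
      k * jdist {z : ℂ | 0 < Complex.arg z ∧ Complex.arg z < π / k}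
        ((s : ℂ) * Complex.exp (θ * Complex.I)) ((t : ℂ) * Complex.exp (θ * Complex.I)) := by
  have hπ := Real.pi_pos
  obtain ⟨hθ0, hθφ⟩ := hθ
  have hk0 : (0:ℝ) < k := by linarith
  have hφ0 : 0 < π / k := lt_trans hθ0 hθφ
  have hφπ : π / k ≤ π := div_le_self hπ.le hk
  have hkπ : k * (π / k) = π := by field_simp
  set θ' := min θ (π / k - θ) with hθ'def
  have hθ'0 : 0 < θ' := lt_min hθ0 (by linarith)
  have hθ'θ : θ' ≤ θ := min_le_left _ _
  have hθ'2 : θ' ≤ π / k - θ := min_le_right _ _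
  have h2θ' : 2 * θ' ≤ π / k := by linarith
  have hkθ' : k * θ' ≤ π / 2 := by nlinarith
  have hkθlt : k * θ < π := by
    have := mul_lt_mul_of_pos_left hθφ hk0
    rwa [hkπ] at this
  have hkθ0 : 0 < k * θ := by positivity
  set s' := Real.sin θ' with hs'def
  set S := Real.sin (k * θ') with hSdef
  have hs'0 : 0 < s' := Real.sin_pos_of_pos_of_lt_pi hθ'0 (by linarith)
  have hs'1 : s' ≤ 1 := Real.sin_le_one _
  have hS1 : S ≤ 1 := Real.sin_le_one _
  have hθ'kθ' : θ' ≤ k * θ' := by nlinarith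
  have hs'S : s' ≤ S := sin_le_sin_aux hθ'0.le hθ'kθ' (by linarith)
  have hS0 : 0 < S := lt_of_lt_of_le hs'0 hs'S
  have hT : k * s' * (1 - S) ≤ S * (1 - s') := trigT hθ'0 hk hkθ'
  have hSkθ : S = Real.sin (k * θ) := by
    rw [hSdef, hθ'def]
    rcases le_total θ (π / k - θ) with h | h
    · rw [min_eq_left h]
    · rw [min_eq_right h, show k * (π / k - θ) = π - k * θ by rw [mul_sub, hkπ],
        Real.sin_pi_sub]
  -- geometry: sector side
  have hGx := infDist_sector hφ0 hφπ hθ0 hθφ hs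
  have hGy := infDist_sector hφ0 hφπ hθ0 hθφ ht
  -- geometry: half-plane side
  have hsk : (0:ℝ) < s ^ k := Real.rpow_pos_of_pos hs k
  have htk : (0:ℝ) < t ^ k := Real.rpow_pos_of_pos ht k
  have hstk : s ^ k ≤ t ^ k := Real.rpow_le_rpow hs.le hst hk0.le
  have hSkθ0 : 0 < Real.sin (k * θ) := by rw [← hSkθ]; exact hS0
  have hHx : Metric.infDist (((s ^ k : ℝ) : ℂ) * Complex.exp ((k * θ : ℝ) * Complex.I))
      (frontier {z : ℂ | 0 < z.im}) = s ^ k * Real.sin (k * θ) := by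
    rw [infDist_halfplane (by rw [im_ofReal_mul_exp]; positivity), im_ofReal_mul_exp]
  have hHy : Metric.infDist (((t ^ k : ℝ) : ℂ) * Complex.exp ((k * θ : ℝ) * Complex.I))
      (frontier {z : ℂ | 0 < z.im}) = t ^ k * Real.sin (k * θ) := by
    rw [infDist_halfplane (by rw [im_ofReal_mul_exp]; positivity), im_ofReal_mul_exp]
  -- distances
  have hdxy : dist ((s : ℂ) * Complex.exp (θ * Complex.I))
      ((t : ℂ) * Complex.exp (θ * Complex.I)) = t - s := by
    rw [Complex.dist_eq, show (s : ℂ) * Complex.exp (θ * Complex.I)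
      - (t : ℂ) * Complex.exp (θ * Complex.I)
      = ((s - t : ℝ) : ℂ) * Complex.exp ((θ:ℝ) * Complex.I) by push_cast; ring,
      abs_ofReal_mul_exp, abs_of_nonpos (by linarith), neg_sub]
  have hdf : dist (((s ^ k : ℝ) : ℂ) * Complex.exp ((k * θ : ℝ) * Complex.I))
      (((t ^ k : ℝ) : ℂ) * Complex.exp ((k * θ : ℝ) * Complex.I)) = t ^ k - s ^ k := by
    rw [Complex.dist_eq, show ((s ^ k : ℝ) : ℂ) * Complex.exp ((k * θ : ℝ) * Complex.I)
      - ((t ^ k : ℝ) : ℂ) * Complex.exp ((k * θ : ℝ) * Complex.I)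
      = ((s ^ k - t ^ k : ℝ) : ℂ) * Complex.exp (((k * θ : ℝ)) * Complex.I) by push_cast; ring,
      abs_ofReal_mul_exp, abs_of_nonpos (by linarith), neg_sub]
  -- u
  set u := t / s with hu
  have hu1 : (1:ℝ) ≤ u := (one_le_div hs).2 hst
  have huk : u ^ k = t ^ k / s ^ k := Real.div_rpow ht.le hs.le k
  -- jdist values
  have hjS : jdist {z : ℂ | 0 < Complex.arg z ∧ Complex.arg z < π / k}
      ((s : ℂ) * Complex.exp (θ * Complex.I)) ((t : ℂ) * Complex.exp (θ * Complex.I))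
      = Real.log (1 + (u - 1) / s') := by
    unfold jdist
    rw [hGx, hGy, hdxy, min_eq_left (by nlinarith : s * s' ≤ t * s')]
    have e : (t - s) / (s * s') = (u - 1) / s' := by
      have e1 : u - 1 = (t - s) / s := by rw [hu]; field_simp
      rw [e1, div_div]
    rw [e]
  have hjH : jdist {z : ℂ | 0 < z.im}
      (((s ^ k : ℝ) : ℂ) * Complex.exp ((k * θ : ℝ) * Complex.I))
      (((t ^ k : ℝ) : ℂ) * Complex.exp ((k * θ : ℝ) * Complex.I))
      = Real.log (1 + (u ^ k - 1) / S) := by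
    unfold jdist
    rw [hHx, hHy, hdf,
      min_eq_left (by nlinarith : s ^ k * Real.sin (k*θ) ≤ t ^ k * Real.sin (k*θ))]
    have e : (t ^ k - s ^ k) / (s ^ k * Real.sin (k*θ)) = (u ^ k - 1) / S := by
      have e1 : u ^ k - 1 = (t ^ k - s ^ k) / s ^ k := by rw [huk]; field_simp
      rw [e1, hSkθ, div_div]
    rw [e]
  rw [hjS, hjH]
  constructor
  · have hcore := core_lower hs'0 hs'S hS1 hk hu1 hT
    rw [div_mul_eq_mul_div, div_le_iff₀ hS0]
    nlinarith
  · exact core_upper hs'0 hs'1 hs'S hk hu1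


/-- For the power map `r e^{iφ} ↦ r^k e^{ikφ}` from the sector `S_{π/k}` into
the upper half plane and two points `x = s e^{iθ}`, `y = t e^{iθ}` with the
same argument,
`(k sin θ'/ sin kθ') j_{S_{π/k}}(x,y) ≤ j_{ℍ²}(f x, f y) ≤ k j_{S_{π/k}}(x,y)`
where `θ' = min(θ, π/k - θ)`. -/
theorem power_map_jdist_same_argument (k : ℝ) (hk : 1 ≤ k) (θ s t : ℝ)
    (hθ : θ ∈ Set.Ioo 0 (π / k)) (hs : 0 < s) (ht : 0 < t) :
    (k * Real.sin (min θ (π / k - θ)) / Real.sin (k * min θ (π / k - θ))) *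
        jdist {z : ℂ | 0 < Complex.arg z ∧ Complex.arg z < π / k}
          ((s : ℂ) * Complex.exp (θ * Complex.I)) ((t : ℂ) * Complex.exp (θ * Complex.I)) ≤
      jdist {z : ℂ | 0 < z.im}
        (((s ^ k : ℝ) : ℂ) * Complex.exp ((k * θ : ℝ) * Complex.I))
        (((t ^ k : ℝ) : ℂ) * Complex.exp ((k * θ : ℝ) * Complex.I)) ∧
    jdist {z : ℂ | 0 < z.im}
        (((s ^ k : ℝ) : ℂ) * Complex.exp ((k * θ : ℝ) * Complex.I))
        (((t ^ k : ℝ) : ℂ) * Complex.exp ((k * θ : ℝ) * Complex.I)) ≤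
      k * jdist {z : ℂ | 0 < Complex.arg z ∧ Complex.arg z < π / k}
        ((s : ℂ) * Complex.exp (θ * Complex.I)) ((t : ℂ) * Complex.exp (θ * Complex.I)) := by
  rcases le_total s t with h | h
  · exact main_ordered k hk θ s t hθ hs ht h
  · obtain ⟨h1, h2⟩ := main_ordered k hk θ t s hθ ht hs h
    rw [jdist_comm _ ((t : ℂ) * Complex.exp (θ * Complex.I)),
      jdist_comm _ (((t ^ k : ℝ) : ℂ) * Complex.exp ((k * θ : ℝ) * Complex.I))] at h1 h2
    exact ⟨h1, h2⟩
end

section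
/- Let n be a positive integer, let 0 < θ ≤ π/(2n), and let x, y be nonzero complex numbers. Then 1 + |xⁿ − yⁿ|/(|x|ⁿ · sin nθ) ≤ (1 + |x − y|/(|x| · sin θ))ⁿ. -/
open Real

private lemma aux_real_ineq (n : ℕ) (s t : ℝ) (hs : 0 < s) (hs1 : s ≤ 1) (ht : 0 ≤ t) :
    1 + ((1 + t) ^ n - 1) / s ≤ (1 + t / s) ^ n := by
  induction n with
  | zero => simp
  | succ n ih =>
    have hA : (1:ℝ) ≤ (1 + t) ^ n := one_le_pow₀ (by linarith)
    have h2 : (1 + ((1 + t) ^ n - 1) / s) * (1 + t / s) ≤ (1 + t / s) ^ (n + 1) := by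
      rw [pow_succ]
      apply mul_le_mul_of_nonneg_right ih
      have := div_nonneg ht hs.le
      linarith
    refine le_trans ?_ h2
    have hdiff : (1 + ((1 + t) ^ n - 1) / s) * (1 + t / s)
        - (1 + ((1 + t) ^ (n + 1) - 1) / s)
        = ((1 + t) ^ n - 1) * t * (1 - s) / s ^ 2 := by
      rw [pow_succ]
      field_simp
      ring
    have hpos : 0 ≤ ((1 + t) ^ n - 1) * t * (1 - s) / s ^ 2 :=
      div_nonneg (mul_nonneg (mul_nonneg (by linarith) ht) (by linarith)) (sq_nonneg s)
    linarith

private lemma aux_norm_pow (x y : ℂ) (n : ℕ) :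
    ‖x ^ n - y ^ n‖ ≤ (‖x‖ + ‖x - y‖) ^ n - ‖x‖ ^ n := by
  induction n with
  | zero => simp
  | succ n ih =>
    have key : x ^ (n+1) - y ^ (n+1) = x * (x ^ n - y ^ n) + (x - y) * y ^ n := by ring
    have hy : ‖y‖ ≤ ‖x‖ + ‖x - y‖ := by
      have h1 := norm_add_le x (y - x)
      have h2 : ‖y - x‖ = ‖x - y‖ := norm_sub_rev y x
      simpa [h2] using h1
    calc ‖x ^ (n+1) - y ^ (n+1)‖
        ≤ ‖x * (x ^ n - y ^ n)‖ + ‖(x - y) * y ^ n‖ := by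
          rw [key]; exact norm_add_le _ _
      _ = ‖x‖ * ‖x ^ n - y ^ n‖
            + ‖x - y‖ * ‖y‖ ^ n := by
          simp [norm_mul, norm_pow]
      _ ≤ ‖x‖ * ((‖x‖ + ‖x - y‖) ^ n - ‖x‖ ^ n)
            + ‖x - y‖ * (‖x‖ + ‖x - y‖) ^ n := by
          gcongr <;>
            first
              | exact norm_nonneg _
              | exact ih
              | exact hy
      _ = (‖x‖ + ‖x - y‖) ^ (n+1) - ‖x‖ ^ (n+1) := by ring

/-- For a positive integer `n`, `0 < θ ≤ π/(2n)` and nonzero complex `x, y`: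
`1 + |xⁿ - yⁿ|/(|x|ⁿ sin nθ) ≤ (1 + |x - y|/(|x| sin θ))ⁿ`. -/
theorem power_diff_ratio_ineq (n : ℕ) (hn : 0 < n) (θ : ℝ)
    (hθ0 : 0 < θ) (hθ : θ ≤ π / (2 * n)) (x y : ℂ) (hx : x ≠ 0) (hy : y ≠ 0) :
    1 + ‖x ^ n - y ^ n‖ / (‖x‖ ^ n * Real.sin (n * θ)) ≤
      (1 + ‖x - y‖ / (‖x‖ * Real.sin θ)) ^ n := by
  set a := ‖x‖ with ha
  set d := ‖x - y‖ with hd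
  have ha0 : 0 < a := by simpa [ha] using norm_pos_iff.mpr hx
  have hd0 : 0 ≤ d := norm_nonneg _
  have hn1 : (1:ℝ) ≤ n := by exact_mod_cast hn
  have hnθ : (n:ℝ) * θ ≤ π / 2 := by
    rw [div_mul_eq_div_div] at hθ
    have hnpos : (0:ℝ) < n := by exact_mod_cast hn
    calc (n:ℝ) * θ ≤ n * (π / 2 / n) := by nlinarith
      _ = π / 2 := by field_simp
  have hθπ2 : θ ≤ π / 2 := le_trans (by nlinarith) hnθ
  have hs : 0 < Real.sin θ :=
    Real.sin_pos_of_pos_of_lt_pi hθ0 (lt_of_le_of_lt hθπ2 (by linarith [Real.pi_pos]))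
  have hs1 : Real.sin θ ≤ 1 := Real.sin_le_one θ
  have hsS : Real.sin θ ≤ Real.sin (n * θ) :=
    Real.sin_le_sin_of_le_of_le_pi_div_two (by linarith) hnθ (by nlinarith)
  have hS : 0 < Real.sin (n * θ) := lt_of_lt_of_le hs hsS
  set t := d / a with htdef
  have ht : 0 ≤ t := div_nonneg hd0 ha0.le
  have hnorm : ‖x ^ n - y ^ n‖ ≤ a ^ n * ((1 + t) ^ n - 1) := by
    have := aux_norm_pow x y n
    have hrw : a + d = a * (1 + t) := by rw [htdef, mul_add, mul_one, mul_div_assoc', mul_comm a d, mul_div_assoc, div_self ha0.ne', mul_one]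
    calc ‖x ^ n - y ^ n‖ ≤ (a + d) ^ n - a ^ n := this
      _ = a ^ n * ((1 + t) ^ n - 1) := by rw [hrw, mul_pow]; ring
  have step1 : ‖x ^ n - y ^ n‖ / (a ^ n * Real.sin (n * θ))
      ≤ ((1 + t) ^ n - 1) / Real.sin (n * θ) := by
    rw [div_le_div_iff₀ (by positivity) hS]
    calc ‖x ^ n - y ^ n‖ * Real.sin (n * θ)
        ≤ (a ^ n * ((1 + t) ^ n - 1)) * Real.sin (n * θ) := by
          exact mul_le_mul_of_nonneg_right hnorm hS.le
      _ = ((1 + t) ^ n - 1) * (a ^ n * Real.sin (n * θ)) := by ring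
  have step2 : ((1 + t) ^ n - 1) / Real.sin (n * θ) ≤ ((1 + t) ^ n - 1) / Real.sin θ := by
    apply div_le_div_of_nonneg_left _ hs hsS
    · nlinarith [one_le_pow₀ (show (1:ℝ) ≤ 1 + t by linarith) (n := n)]
  have step3 := aux_real_ineq n (Real.sin θ) t hs hs1 ht
  have hrw2 : d / (a * Real.sin θ) = t / Real.sin θ := by
    rw [htdef, div_div]
  rw [hrw2]
  linarith
end

section
/- Let d ≥ 1 and let Q be a complex polynomial of exact degree d which has no zeros in the open unit disk 𝔻. Then for all u, v ∈ 𝔻: |Q(u)/Q(v) − 1| ≤ (1 + |u − v|/(1 − |v|))^d − 1, and consequently |Q(u)/Q(v)| ≤ (1 + |u − v|/(1 − |v|))^d. -/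
open Metric

lemma aux_prod_sub_one_bound (t : ℝ) (ht : 1 ≤ t) (s : Multiset ℂ)
    (h : ∀ a ∈ s, ‖a - 1‖ ≤ t - 1) :
    ‖s.prod - 1‖ ≤ t ^ (Multiset.card s) - 1 := by
  induction s using Multiset.induction with
  | empty => simp
  | cons a s ih =>
    have ha : ‖a - 1‖ ≤ t - 1 := h a (Multiset.mem_cons_self a s)
    have hs : ‖s.prod - 1‖ ≤ t ^ (Multiset.card s) - 1 :=
      ih (fun b hb => h b (Multiset.mem_cons_of_mem hb))
    have haa : ‖a‖ ≤ t := by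
      calc ‖a‖ = ‖(a - 1) + 1‖ := by ring_nf
        _ ≤ ‖a - 1‖ + ‖1‖ := norm_add_le _ _
        _ ≤ (t - 1) + 1 := by rw [norm_one]; linarith
        _ = t := by ring
    have key : a * s.prod - 1 = a * (s.prod - 1) + (a - 1) := by ring
    calc ‖(a ::ₘ s).prod - 1‖
        = ‖a * (s.prod - 1) + (a - 1)‖ := by rw [Multiset.prod_cons, key]
      _ ≤ ‖a * (s.prod - 1)‖ + ‖a - 1‖ := norm_add_le _ _
      _ = ‖a‖ * ‖s.prod - 1‖ + ‖a - 1‖ := by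
          rw [norm_mul]
      _ ≤ t * (t ^ (Multiset.card s) - 1) + (t - 1) := by
          have h0 : (0:ℝ) ≤ ‖s.prod - 1‖ := norm_nonneg _
          nlinarith [norm_nonneg a]
      _ = t ^ (Multiset.card (a ::ₘ s)) - 1 := by
          rw [Multiset.card_cons, pow_succ]; ring

/-- If `Q` is a complex polynomial of exact degree `d ≥ 1` with no zeros in
the open unit disk, then for all `u, v` in the disk
`|Q(u)/Q(v) - 1| ≤ (1 + |u-v|/(1-|v|))^d - 1`, and consequently
`|Q(u)/Q(v)| ≤ (1 + |u-v|/(1-|v|))^d`. -/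
theorem polynomial_no_zero_quotient_bound (d : ℕ) (hd : 1 ≤ d) (Q : Polynomial ℂ)
    (hdeg : Q.natDegree = d) (hz : ∀ z ∈ Metric.ball (0 : ℂ) 1, Q.eval z ≠ 0)
    (u v : ℂ) (hu : u ∈ Metric.ball (0 : ℂ) 1) (hv : v ∈ Metric.ball (0 : ℂ) 1) :
    ‖Q.eval u / Q.eval v - 1‖ ≤
        (1 + ‖u - v‖ / (1 - ‖v‖)) ^ d - 1 ∧
      ‖Q.eval u / Q.eval v‖ ≤
        (1 + ‖u - v‖ / (1 - ‖v‖)) ^ d := by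
  have hQ0 : Q ≠ 0 := by
    intro h
    rw [h] at hdeg
    simp at hdeg
    omega
  have hvball : ‖v‖ < 1 := by simpa [Complex.dist_eq] using hv
  have hpos : (0:ℝ) < 1 - ‖v‖ := by linarith
  set t : ℝ := 1 + ‖u - v‖ / (1 - ‖v‖) with ht_def
  have ht1 : 1 ≤ t := by
    have : 0 ≤ ‖u - v‖ / (1 - ‖v‖) :=
      div_nonneg (norm_nonneg _) hpos.le
    simp only [ht_def]
    linarith
  -- roots
  have hroot_abs : ∀ r ∈ Q.roots, 1 ≤ ‖r‖ := by
    intro r hr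
    by_contra h
    push_neg at h
    exact hz r (by simpa [Complex.dist_eq] using h) ((Polynomial.mem_roots hQ0).1 hr)
  have hsplit : Q = Polynomial.C Q.leadingCoeff *
      (Q.roots.map (fun r => Polynomial.X - Polynomial.C r)).prod :=
    (IsAlgClosed.splits Q).eq_prod_roots
  have hcard : Multiset.card Q.roots = d := by
    rw [← hdeg]
    exact (Polynomial.splits_iff_card_roots.1 (IsAlgClosed.splits Q))
  have heval : ∀ w : ℂ, Q.eval w = Q.leadingCoeff * (Q.roots.map (fun r => w - r)).prod := by
    intro w
    conv_lhs => rw [hsplit]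
    simp [Polynomial.eval_multiset_prod, Multiset.map_map, Function.comp]
  have hvr : ∀ r ∈ Q.roots, 1 - ‖v‖ ≤ ‖v - r‖ := by
    intro r hr
    have h1 := hroot_abs r hr
    have h2 : ‖r‖ - ‖v‖ ≤ ‖r - v‖ := by
      simpa using norm_sub_norm_le r v
    have habs : ‖v - r‖ = ‖r - v‖ := by
      rw [← norm_neg]; ring_nf
    linarith [habs ▸ h2]
  have hvr0 : ∀ r ∈ Q.roots, v - r ≠ 0 := by
    intro r hr h
    have := hvr r hr
    rw [h] at this
    simp at this
    linarith
  have hlc : Q.leadingCoeff ≠ 0 := Polynomial.leadingCoeff_ne_zero.2 hQ0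
  have hQv : Q.eval v ≠ 0 := hz v hv
  -- quotient as product
  have hquot : Q.eval u / Q.eval v = (Q.roots.map (fun r => (u - r) / (v - r))).prod := by
    rw [heval u, heval v]
    rw [mul_div_mul_left _ _ hlc]
    rw [← Multiset.prod_map_div]
  -- bound each factor
  have hfac : ∀ a ∈ Q.roots.map (fun r => (u - r) / (v - r)),
      ‖a - 1‖ ≤ t - 1 := by
    intro a ha
    obtain ⟨r, hr, rfl⟩ := Multiset.mem_map.1 ha
    have h0 : v - r ≠ 0 := hvr0 r hr
    have : (u - r) / (v - r) - 1 = (u - v) / (v - r) := by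
      field_simp
      ring
    rw [this, norm_div]
    have hden := hvr r hr
    have : ‖u - v‖ / ‖v - r‖ ≤
        ‖u - v‖ / (1 - ‖v‖) :=
      div_le_div_of_nonneg_left (norm_nonneg _) hpos hden
    simp only [ht_def]
    linarith
  have hmain : ‖Q.eval u / Q.eval v - 1‖ ≤ t ^ d - 1 := by
    rw [hquot]
    have := aux_prod_sub_one_bound t ht1 _ hfac
    rwa [Multiset.card_map, hcard] at this
  refine ⟨hmain, ?_⟩
  calc ‖Q.eval u / Q.eval v‖
      = ‖(Q.eval u / Q.eval v - 1) + 1‖ := by ring_nf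
    _ ≤ ‖Q.eval u / Q.eval v - 1‖ + ‖1‖ := norm_add_le _ _
    _ ≤ (t ^ d - 1) + 1 := by rw [norm_one]; linarith [hmain]
    _ = t ^ d := by ring
end

section
/- Let p be a positive integer, let a₁, …, a_p ∈ ℂ with Σ_{k=1}^{p} |a_k| ≤ 1, and let f(z) = Σ_{k=1}^{p} a_k z^k. Assume f is not identically zero and f(z) ≠ 0 for every z ∈ 𝔻 \ {0}, so f maps 𝔻 \ {0} into 𝔻 \ {0} with f(0) = 0. Then for all x, y ∈ 𝔻 \ {0}: j_{𝔻∖{0}}(f(x), f(y)) ≤ p · j_{𝔻∖{0}}(x, y). Moreover, for f(z) = z^p and x = t, y = s with 0 < s < t < 1/2, equality j_{𝔻∖{0}}(f(t), f(s)) = p · j_{𝔻∖{0}}(t, s) holds, so the constant p is sharp. -/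
open Metric Filter Topology Set

private lemma frontier_punctured :
    frontier (Metric.ball (0:ℂ) 1 \ {0}) = Metric.sphere (0:ℂ) 1 ∪ {0} := by
  have hopen : IsOpen (Metric.ball (0:ℂ) 1 \ {0}) :=
    Metric.isOpen_ball.sdiff isClosed_singleton
  have hclos : closure (Metric.ball (0:ℂ) 1 \ {0}) = Metric.closedBall (0:ℂ) 1 := by
    apply le_antisymm
    · calc closure (Metric.ball (0:ℂ) 1 \ {0}) ⊆ closure (Metric.ball (0:ℂ) 1) :=
            closure_mono diff_subset
        _ = Metric.closedBall (0:ℂ) 1 := _root_.closure_ball (0:ℂ) one_ne_zero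
    · rw [← _root_.closure_ball (0:ℂ) one_ne_zero]
      apply closure_minimal ?_ isClosed_closure
      intro z hz
      rcases eq_or_ne z 0 with rfl | hz0
      · rw [Metric.mem_closure_iff]
        intro ε hε
        refine ⟨((((min ε 1) / 2 : ℝ)) : ℂ), ⟨?_, ?_⟩, ?_⟩
        · rw [Metric.mem_ball, dist_zero_right]
          rw [Complex.norm_real, Real.norm_eq_abs]
          rw [abs_of_pos (by positivity)]
          nlinarith [min_le_right ε 1]
        · simp only [Set.mem_singleton_iff]
          intro h
          have : ((min ε 1) / 2 : ℝ) = 0 := by exact_mod_cast h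
          nlinarith [lt_min hε one_pos]
        · rw [dist_comm, dist_zero_right]
          simp only [Complex.norm_real, Real.norm_eq_abs]
          rw [abs_of_pos (by positivity)]
          nlinarith [min_le_left ε 1]
      · exact subset_closure ⟨hz, hz0⟩
  rw [frontier, hclos, hopen.interior_eq]
  ext z
  simp only [Set.mem_diff, Metric.mem_closedBall, Metric.mem_ball, Set.mem_union,
    Metric.mem_sphere, Set.mem_singleton_iff, dist_zero_right]
  constructor
  · rintro ⟨h1, h2⟩
    by_cases hz : z = 0
    · exact Or.inr hz
    · left
      by_contra hne
      exact h2 ⟨lt_of_le_of_ne h1 hne, hz⟩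
  · rintro (h | h)
    · exact ⟨le_of_eq h, fun hc => absurd h (ne_of_lt hc.1)⟩
    · subst h; simp

private lemma infDist_punctured (z : ℂ) (h1 : ‖z‖ < 1) (h0 : z ≠ 0) :
    Metric.infDist z (frontier (Metric.ball (0:ℂ) 1 \ {0}))
      = min (‖z‖) (1 - ‖z‖) := by
  rw [frontier_punctured]
  have habs : (0:ℝ) < ‖z‖ := by
    simpa [norm_pos_iff] using h0
  apply le_antisymm
  · apply le_min
    · have h0mem : (0:ℂ) ∈ Metric.sphere (0:ℂ) 1 ∪ {0} := Or.inr rfl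
      simpa [Complex.dist_eq] using Metric.infDist_le_dist_of_mem h0mem
    · have hwmem : z / (‖z‖ : ℂ) ∈ Metric.sphere (0:ℂ) 1 ∪ {0} := by
        left
        simp only [Metric.mem_sphere, dist_zero_right, norm_div,
          Complex.norm_real, Real.norm_eq_abs, abs_of_pos habs]
        field_simp
      refine le_trans (Metric.infDist_le_dist_of_mem hwmem) ?_
      rw [Complex.dist_eq]
      have hcne : ((‖z‖ : ℝ) : ℂ) ≠ 0 := by
        simpa using ne_of_gt habs
      have : z - z / (‖z‖ : ℂ) = z * (1 - 1 / (‖z‖ : ℂ)) := by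
        field_simp
      rw [this, norm_mul]
      have : ‖1 - 1 / (‖z‖ : ℂ)‖ = 1 / ‖z‖ - 1 := by
        have : (1 : ℂ) - 1 / (‖z‖ : ℂ) = (((1 - 1 / ‖z‖ : ℝ)) : ℂ) := by
          push_cast; ring
        rw [this, Complex.norm_real, Real.norm_eq_abs, abs_of_nonpos (by
          have : (1:ℝ) ≤ 1 / ‖z‖ := by
            rw [le_div_iff₀ habs]; nlinarith
          linarith)]
        ring
      rw [this]
      field_simp; exact le_rfl
  · apply le_of_not_gt
    intro hlt
    obtain ⟨y, hy, hdy⟩ := (Metric.infDist_lt_iff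
      (⟨0, by simp⟩ : (Metric.sphere (0:ℂ) 1 ∪ {0}).Nonempty)).mp hlt
    rcases hy with hy | hy
    · have h1y : ‖y‖ = 1 := by
        simpa [Complex.dist_eq] using hy
      have : 1 - ‖z‖ ≤ dist z y := by
        rw [Complex.dist_eq]
        have h2 := abs_norm_sub_norm_le z y
        have h3 := abs_le.mp h2
        linarith [h3.1, h1y]
      have := lt_of_le_of_lt this hdy
      have := min_le_right (‖z‖) (1 - ‖z‖)
      linarith
    · have hy0 : y = 0 := hy
      subst hy0
      rw [Complex.dist_eq, sub_zero] at hdy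
      have := min_le_left (‖z‖) (1 - ‖z‖)
      linarith

private lemma jdist_eq (x y : ℂ) (hx1 : ‖x‖ < 1) (hx0 : x ≠ 0)
    (hy1 : ‖y‖ < 1) (hy0 : y ≠ 0) :
    jdist (Metric.ball (0:ℂ) 1 \ {0}) x y
      = Real.log (1 + ‖x - y‖ /
          min (min (‖x‖) (1 - ‖x‖))
            (min (‖y‖) (1 - ‖y‖))) := by
  rw [jdist, infDist_punctured x hx1 hx0, infDist_punctured y hy1 hy0, Complex.dist_eq]

private lemma abs_pow_sub_pow_le' (x y : ℂ) (hx : ‖x‖ ≤ 1)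
    (hy : ‖y‖ ≤ 1) (k : ℕ) :
    ‖x ^ k - y ^ k‖ ≤ k * ‖x - y‖ := by
  induction k with
  | zero => simp
  | succ k ih =>
    have hid : x ^ (k+1) - y ^ (k+1) = x ^ k * (x - y) + (x ^ k - y ^ k) * y := by ring
    calc ‖x ^ (k+1) - y ^ (k+1)‖
        ≤ ‖x ^ k * (x - y)‖ + ‖(x ^ k - y ^ k) * y‖ := by
          rw [hid]; exact norm_add_le _ _
      _ = ‖x‖ ^ k * ‖x - y‖
            + ‖x ^ k - y ^ k‖ * ‖y‖ := by
          rw [norm_mul, norm_mul, norm_pow]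
      _ ≤ 1 * ‖x - y‖ + (k * ‖x - y‖) * 1 := by
          have h1 : ‖x‖ ^ k ≤ 1 := pow_le_one₀ (norm_nonneg x) hx
          have h2 := norm_nonneg (x - y)
          have h3 := norm_nonneg (x ^ k - y ^ k)
          have h4 : ‖x ^ k - y ^ k‖ * ‖y‖
              ≤ (k * ‖x - y‖) * 1 := by
            have := mul_le_mul ih hy (norm_nonneg y) (by positivity)
            simpa using this
          nlinarith
      _ = (k + 1 : ℕ) * ‖x - y‖ := by push_cast; ring

private lemma prod_diff_le (x y : ℂ) (m : ℝ) (hm : 0 < m) (s : Multiset ℂ)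
    (hs : ∀ r ∈ s, m ≤ ‖y - r‖) :
    ‖(s.map (fun r => x - r)).prod - (s.map (fun r => y - r)).prod‖ ≤
      ‖(s.map (fun r => y - r)).prod‖ *
        ((1 + ‖x - y‖ / m) ^ Multiset.card s - 1) := by
  induction s using Multiset.induction with
  | empty => simp
  | cons a s ih =>
    have hsa : m ≤ ‖y - a‖ := hs a (Multiset.mem_cons_self a s)
    have hss : ∀ r ∈ s, m ≤ ‖y - r‖ :=
      fun r hr => hs r (Multiset.mem_cons_of_mem hr)
    set t := ‖x - y‖ with ht
    have htn : 0 ≤ t := norm_nonneg _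
    set c := 1 + t / m with hc
    have hc1 : 1 ≤ c := by
      have : 0 ≤ t / m := by positivity
      simp [hc]; linarith
    set Px := (s.map (fun r => x - r)).prod with hPx
    set Py := (s.map (fun r => y - r)).prod with hPy
    have hmap : ((a ::ₘ s).map (fun r => x - r)).prod = (x - a) * Px := by
      rw [Multiset.map_cons, Multiset.prod_cons]
    have hmap' : ((a ::ₘ s).map (fun r => y - r)).prod = (y - a) * Py := by
      rw [Multiset.map_cons, Multiset.prod_cons]
    rw [hmap, hmap', Multiset.card_cons]
    clear_value t c Px Py
    have hid : (x - a) * Px - (y - a) * Py = (x - a) * (Px - Py) + (x - y) * Py := by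
      ring
    have hxa : ‖x - a‖ ≤ c * ‖y - a‖ := by
      have h1 : ‖x - a‖ ≤ ‖y - a‖ + t := by
        have := norm_add_le (x - y) (y - a)
        have hxy : (x - y) + (y - a) = x - a := by ring
        rw [hxy] at this
        linarith
      have h2 : t ≤ (t / m) * ‖y - a‖ := by
        rw [div_mul_eq_mul_div, le_div_iff₀ hm]
        nlinarith
      have hexp : c * ‖y - a‖
          = ‖y - a‖ + (t / m) * ‖y - a‖ := by
        rw [hc]; ring
      linarith
    have ht2 : t ≤ (c - 1) * ‖y - a‖ := by
      have h2 : t ≤ (t / m) * ‖y - a‖ := by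
        rw [div_mul_eq_mul_div, le_div_iff₀ hm]
        nlinarith
      simp only [hc]
      calc t ≤ (t / m) * ‖y - a‖ := h2
        _ = (1 + t / m - 1) * ‖y - a‖ := by ring
    have ihs := ih hss
    have hcn : (0:ℝ) ≤ c ^ Multiset.card s - 1 := by
      have := one_le_pow₀ (M₀ := ℝ) hc1 (n := Multiset.card s)
      linarith
    calc ‖(x - a) * Px - (y - a) * Py‖
        ≤ ‖x - a‖ * ‖Px - Py‖
            + t * ‖Py‖ := by
          rw [hid]
          refine le_trans (norm_add_le _ _) ?_
          rw [norm_mul, norm_mul, ← ht]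
      _ ≤ (c * ‖y - a‖) * (‖Py‖ * (c ^ Multiset.card s - 1))
            + ((c - 1) * ‖y - a‖) * ‖Py‖ := by
          have hb1 : ‖x - a‖ * ‖Px - Py‖
              ≤ (c * ‖y - a‖) * (‖Py‖ * (c ^ Multiset.card s - 1)) := by
            apply mul_le_mul hxa ihs (norm_nonneg _)
            positivity
          have hb2 : t * ‖Py‖ ≤ ((c - 1) * ‖y - a‖) * ‖Py‖ := by
            apply mul_le_mul_of_nonneg_right ht2 (norm_nonneg _)
          linarith
      _ = ‖(y - a) * Py‖ * (c ^ (Multiset.card s + 1) - 1) := by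
          rw [norm_mul]; ring

private lemma key_bound (p : ℕ) (a : ℕ → ℂ) (f : ℂ → ℂ)
    (hf : ∀ z, f z = ∑ k ∈ Finset.Icc 1 p, a k * z ^ k)
    (hne : ∃ z, f z ≠ 0)
    (hroots : ∀ r : ℂ, f r = 0 → r = 0 ∨ 1 ≤ ‖r‖)
    (x y : ℂ) (m : ℝ) (hm : 0 < m)
    (hmy : m ≤ ‖y‖) (hmy1 : m ≤ 1 - ‖y‖) :
    ‖f x - f y‖ ≤
      ‖f y‖ * ((1 + ‖x - y‖ / m) ^ p - 1) := by
  set P : Polynomial ℂ := ∑ k ∈ Finset.Icc 1 p, Polynomial.C (a k) * Polynomial.X ^ k with hP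
  have heval : ∀ z, P.eval z = f z := by
    intro z
    rw [hf, hP, Polynomial.eval_finset_sum]
    simp
  have hP0 : P ≠ 0 := by
    obtain ⟨z, hz⟩ := hne
    intro h
    exact hz (by rw [← heval, h, Polynomial.eval_zero])
  have hdeg : P.natDegree ≤ p := by
    rw [hP]
    apply Polynomial.natDegree_sum_le_of_forall_le
    intro k hk
    exact le_trans (Polynomial.natDegree_C_mul_X_pow_le (a k) k) (Finset.mem_Icc.mp hk).2
  have hcard : Multiset.card P.roots ≤ p := (Polynomial.card_roots' P).trans hdeg
  have hfac := Polynomial.Splits.eq_prod_roots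
    (IsAlgClosed.splits P)
  have hevalprod : ∀ z, f z
      = P.leadingCoeff * ((P.roots.map (fun r => z - r)).prod) := by
    intro z
    rw [← heval z]
    conv_lhs => rw [hfac]
    rw [Polynomial.eval_mul, Polynomial.eval_C, Polynomial.eval_multiset_prod,
      Multiset.map_map]
    congr 1
    congr 1
    apply Multiset.map_congr rfl
    intro r _
    simp
  have hroots' : ∀ r ∈ P.roots, m ≤ ‖y - r‖ := by
    intro r hr
    have hfr : f r = 0 := by
      rw [← heval]
      exact ((Polynomial.mem_roots hP0).mp hr)
    rcases hroots r hfr with rfl | h1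
    · simpa using hmy
    · have h2 := abs_norm_sub_norm_le y r
      have h3 := abs_le.mp h2
      have := norm_nonneg (y - r)
      linarith [h3.1]
  have hprod := prod_diff_le x y m hm P.roots hroots'
  have hc1 : (1:ℝ) ≤ 1 + ‖x - y‖ / m := by
    have : (0:ℝ) ≤ ‖x - y‖ / m := by positivity
    linarith
  have hpow : (1 + ‖x - y‖ / m) ^ Multiset.card P.roots
      ≤ (1 + ‖x - y‖ / m) ^ p := pow_le_pow_right₀ hc1 hcard
  calc ‖f x - f y‖
      = ‖P.leadingCoeff‖ *
          ‖(P.roots.map (fun r => x - r)).prod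
            - (P.roots.map (fun r => y - r)).prod‖ := by
        rw [hevalprod x, hevalprod y, ← mul_sub, norm_mul]
    _ ≤ ‖P.leadingCoeff‖ *
          (‖(P.roots.map (fun r => y - r)).prod‖ *
            ((1 + ‖x - y‖ / m) ^ Multiset.card P.roots - 1)) := by
        apply mul_le_mul_of_nonneg_left hprod (norm_nonneg _)
    _ ≤ ‖P.leadingCoeff‖ *
          (‖(P.roots.map (fun r => y - r)).prod‖ *
            ((1 + ‖x - y‖ / m) ^ p - 1)) := by
        apply mul_le_mul_of_nonneg_left ?_ (norm_nonneg _)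
        apply mul_le_mul_of_nonneg_left ?_ (norm_nonneg _)
        linarith
    _ = ‖f y‖ * ((1 + ‖x - y‖ / m) ^ p - 1) := by
        rw [hevalprod y, norm_mul]; ring

private lemma f_lip (p : ℕ) (a : ℕ → ℂ)
    (hsum : ∑ k ∈ Finset.Icc 1 p, ‖a k‖ ≤ 1)
    (f : ℂ → ℂ) (hf : ∀ z, f z = ∑ k ∈ Finset.Icc 1 p, a k * z ^ k)
    (x y : ℂ) (hx : ‖x‖ ≤ 1) (hy : ‖y‖ ≤ 1) :
    ‖f x - f y‖ ≤ p * ‖x - y‖ := by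
  have hsub : f x - f y = ∑ k ∈ Finset.Icc 1 p, a k * (x ^ k - y ^ k) := by
    rw [hf, hf, ← Finset.sum_sub_distrib]
    congr 1
    funext k
    ring
  rw [hsub]
  calc ‖∑ k ∈ Finset.Icc 1 p, a k * (x ^ k - y ^ k)‖
      ≤ ∑ k ∈ Finset.Icc 1 p, ‖a k * (x ^ k - y ^ k)‖ :=
        norm_sum_le _ _
    _ ≤ ∑ k ∈ Finset.Icc 1 p, ‖a k‖ * (p * ‖x - y‖) := by
        apply Finset.sum_le_sum
        intro k hk
        rw [norm_mul]
        apply mul_le_mul_of_nonneg_left ?_ (norm_nonneg _)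
        refine le_trans (abs_pow_sub_pow_le' x y hx hy k) ?_
        have hk2 : (k:ℝ) ≤ p := by exact_mod_cast (Finset.mem_Icc.mp hk).2
        apply mul_le_mul_of_nonneg_right hk2 (norm_nonneg _)
    _ = (∑ k ∈ Finset.Icc 1 p, ‖a k‖) * (p * ‖x - y‖) := by
        rw [Finset.sum_mul]
    _ ≤ 1 * (p * ‖x - y‖) := by
        apply mul_le_mul_of_nonneg_right hsum (by positivity)
    _ = p * ‖x - y‖ := one_mul _

private lemma f_le_abs (p : ℕ) (a : ℕ → ℂ)
    (hsum : ∑ k ∈ Finset.Icc 1 p, ‖a k‖ ≤ 1)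
    (f : ℂ → ℂ) (hf : ∀ z, f z = ∑ k ∈ Finset.Icc 1 p, a k * z ^ k)
    (z : ℂ) (hz : ‖z‖ ≤ 1) :
    ‖f z‖ ≤ ‖z‖ := by
  rw [hf]
  calc ‖∑ k ∈ Finset.Icc 1 p, a k * z ^ k‖
      ≤ ∑ k ∈ Finset.Icc 1 p, ‖a k * z ^ k‖ := norm_sum_le _ _
    _ ≤ ∑ k ∈ Finset.Icc 1 p, ‖a k‖ * ‖z‖ := by
        apply Finset.sum_le_sum
        intro k hk
        rw [norm_mul, norm_pow]
        apply mul_le_mul_of_nonneg_left ?_ (norm_nonneg _)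
        have h1 : ‖z‖ ^ k ≤ ‖z‖ ^ 1 :=
          pow_le_pow_of_le_one (norm_nonneg z) hz (Finset.mem_Icc.mp hk).1
        simpa using h1
    _ = (∑ k ∈ Finset.Icc 1 p, ‖a k‖) * ‖z‖ := by
        rw [Finset.sum_mul]
    _ ≤ 1 * ‖z‖ :=
        mul_le_mul_of_nonneg_right hsum (norm_nonneg _)
    _ = ‖z‖ := one_mul _

/-- If `f(z) = Σ_{k=1}^p a_k z^k` with `Σ |a_k| ≤ 1`, `f` not identically zero
and zero-free on `𝔻 \ {0}`, then `j_{𝔻∖{0}}(f x, f y) ≤ p j_{𝔻∖{0}}(x, y)`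
for all `x, y ∈ 𝔻 \ {0}`; for `f(z) = z^p` and `0 < s < t < 1/2` equality
holds, so the constant `p` is sharp. -/
theorem polynomial_punctured_disk_jdist_lipschitz_sharp (p : ℕ) (hp : 0 < p)
    (a : ℕ → ℂ) (hsum : ∑ k ∈ Finset.Icc 1 p, ‖a k‖ ≤ 1)
    (f : ℂ → ℂ) (hf : ∀ z, f z = ∑ k ∈ Finset.Icc 1 p, a k * z ^ k)
    (hne : ∃ z, f z ≠ 0)
    (hzero : ∀ z ∈ Metric.ball (0 : ℂ) 1 \ {0}, f z ≠ 0) :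
    (∀ x ∈ Metric.ball (0 : ℂ) 1 \ {0}, ∀ y ∈ Metric.ball (0 : ℂ) 1 \ {0},
        jdist (Metric.ball (0 : ℂ) 1 \ {0}) (f x) (f y) ≤
          p * jdist (Metric.ball (0 : ℂ) 1 \ {0}) x y) ∧
      ∀ s t : ℝ, 0 < s → s < t → t < 1 / 2 →
        jdist (Metric.ball (0 : ℂ) 1 \ {0}) ((t : ℂ) ^ p) ((s : ℂ) ^ p) =
          p * jdist (Metric.ball (0 : ℂ) 1 \ {0}) (t : ℂ) (s : ℂ) := by
  constructor
  · -- the Lipschitz bound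
    intro x hx y hy
    have hx1 : ‖x‖ < 1 := by
      have := hx.1
      rwa [Metric.mem_ball, dist_zero_right] at this
    have hx0 : x ≠ 0 := hx.2
    have hy1 : ‖y‖ < 1 := by
      have := hy.1
      rwa [Metric.mem_ball, dist_zero_right] at this
    have hy0 : y ≠ 0 := hy.2
    have hax : 0 < ‖x‖ := by simpa [norm_pos_iff] using hx0
    have hay : 0 < ‖y‖ := by simpa [norm_pos_iff] using hy0
    have hfx0 : f x ≠ 0 := hzero x hx
    have hfy0 : f y ≠ 0 := hzero y hy
    have hfxle : ‖f x‖ ≤ ‖x‖ :=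
      f_le_abs p a hsum f hf x hx1.le
    have hfyle : ‖f y‖ ≤ ‖y‖ :=
      f_le_abs p a hsum f hf y hy1.le
    have hfx1 : ‖f x‖ < 1 := lt_of_le_of_lt hfxle hx1
    have hfy1 : ‖f y‖ < 1 := lt_of_le_of_lt hfyle hy1
    have hafx : 0 < ‖f x‖ := by simpa [norm_pos_iff] using hfx0
    have hafy : 0 < ‖f y‖ := by simpa [norm_pos_iff] using hfy0
    set m : ℝ := min (min (‖x‖) (1 - ‖x‖))
      (min (‖y‖) (1 - ‖y‖)) with hmdef
    have hm : 0 < m := by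
      apply lt_min
      · exact lt_min hax (by linarith)
      · exact lt_min hay (by linarith)
    set t : ℝ := ‖x - y‖ with htdef
    have htn : 0 ≤ t := norm_nonneg _
    set c : ℝ := 1 + t / m with hcdef
    have hc1 : (1:ℝ) ≤ c := by
      have : (0:ℝ) ≤ t / m := by positivity
      simp only [hcdef]; linarith
    have hcp1 : (0:ℝ) ≤ c ^ p - 1 := by
      have := one_le_pow₀ (M₀ := ℝ) hc1 (n := p)
      linarith
    have hroots : ∀ r : ℂ, f r = 0 → r = 0 ∨ 1 ≤ ‖r‖ := by
      intro r hr
      by_contra hcon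
      push_neg at hcon
      obtain ⟨hr0, hr1⟩ := hcon
      refine hzero r ⟨?_, hr0⟩ hr
      rw [Metric.mem_ball, dist_zero_right]
      exact hr1
    -- product bounds in both directions
    have hkey1 : ‖f x - f y‖ ≤ ‖f y‖ * (c ^ p - 1) := by
      have := key_bound p a f hf hne hroots x y m hm
        (le_trans (min_le_right _ _) (min_le_left _ _))
        (le_trans (min_le_right _ _) (min_le_right _ _))
      simpa [← htdef, ← hcdef] using this
    have hkey2 : ‖f x - f y‖ ≤ ‖f x‖ * (c ^ p - 1) := by
      have := key_bound p a f hf hne hroots y x m hm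
        (le_trans (min_le_left _ _) (min_le_left _ _))
        (le_trans (min_le_left _ _) (min_le_right _ _))
      rw [norm_sub_rev (f x) (f y)]
      have hyx : ‖y - x‖ = t := by rw [norm_sub_rev, ← htdef]
      rwa [hyx, ← hcdef] at this
    -- Lipschitz bound with Bernoulli
    have hlip : ‖f x - f y‖ ≤ (c ^ p - 1) * m := by
      have h1 : ‖f x - f y‖ ≤ p * t :=
        f_lip p a hsum f hf x y hx1.le hy1.le
      have hbern : 1 + (p:ℝ) * (t / m) ≤ c ^ p := by
        have h0 : (0:ℝ) ≤ t / m := by positivity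
        have := one_add_mul_le_pow (by linarith : (-2:ℝ) ≤ t / m) p
        simpa [hcdef, mul_comm] using this
      have : (p:ℝ) * t ≤ (c ^ p - 1) * m := by
        have h2 : (p:ℝ) * (t / m) * m ≤ (c ^ p - 1) * m :=
          mul_le_mul_of_nonneg_right (by linarith) hm.le
        calc (p:ℝ) * t = (p:ℝ) * (t / m) * m := by field_simp
          _ ≤ (c ^ p - 1) * m := h2
      linarith
    -- the image minimum
    set m' : ℝ := min (min (‖f x‖) (1 - ‖f x‖))
      (min (‖f y‖) (1 - ‖f y‖)) with hm'def
    have hm' : 0 < m' := by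
      apply lt_min
      · exact lt_min hafx (by linarith)
      · exact lt_min hafy (by linarith)
    have hmm'1 : m ≤ 1 - ‖f x‖ := by
      have : m ≤ 1 - ‖x‖ := le_trans (min_le_left _ _) (min_le_right _ _)
      linarith
    have hmm'2 : m ≤ 1 - ‖f y‖ := by
      have : m ≤ 1 - ‖y‖ := le_trans (min_le_right _ _) (min_le_right _ _)
      linarith
    have hM : ‖f x - f y‖ ≤ (c ^ p - 1) * m' := by
      rcases min_cases (min (‖f x‖) (1 - ‖f x‖))
        (min (‖f y‖) (1 - ‖f y‖)) with ⟨he, _⟩ | ⟨he, _⟩ <;>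
        rw [hm'def, he]
      · rcases min_cases (‖f x‖) (1 - ‖f x‖) with ⟨he2, _⟩ | ⟨he2, _⟩ <;>
          rw [he2]
        · calc ‖f x - f y‖ ≤ ‖f x‖ * (c ^ p - 1) := hkey2
            _ = (c ^ p - 1) * ‖f x‖ := by ring
        · calc ‖f x - f y‖ ≤ (c ^ p - 1) * m := hlip
            _ ≤ (c ^ p - 1) * (1 - ‖f x‖) :=
              mul_le_mul_of_nonneg_left hmm'1 hcp1
      · rcases min_cases (‖f y‖) (1 - ‖f y‖) with ⟨he2, _⟩ | ⟨he2, _⟩ <;>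
          rw [he2]
        · calc ‖f x - f y‖ ≤ ‖f y‖ * (c ^ p - 1) := hkey1
            _ = (c ^ p - 1) * ‖f y‖ := by ring
        · calc ‖f x - f y‖ ≤ (c ^ p - 1) * m := hlip
            _ ≤ (c ^ p - 1) * (1 - ‖f y‖) :=
              mul_le_mul_of_nonneg_left hmm'2 hcp1
    -- conclude
    rw [jdist_eq (f x) (f y) hfx1 hfx0 hfy1 hfy0, jdist_eq x y hx1 hx0 hy1 hy0]
    rw [← hmdef, ← htdef, ← hm'def, ← hcdef]
    have hineq : 1 + ‖f x - f y‖ / m' ≤ c ^ p := by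
      have : ‖f x - f y‖ / m' ≤ c ^ p - 1 := by
        rw [div_le_iff₀ hm']
        linarith [hM]
      linarith
    calc Real.log (1 + ‖f x - f y‖ / m')
        ≤ Real.log (c ^ p) := by
          apply Real.log_le_log (by positivity) hineq
      _ = p * Real.log c := by rw [Real.log_pow]
    -- done
  · -- sharpness
    intro s t hs hst ht
    have hts : 0 < t := hs.trans hst
    have ht1 : t < 1 := by linarith
    have hs1 : s < 1 := by linarith
    have habt : ‖(t : ℂ)‖ = t := by
      rw [Complex.norm_real, Real.norm_eq_abs, abs_of_pos hts]
    have habs : ‖(s : ℂ)‖ = s := by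
      rw [Complex.norm_real, Real.norm_eq_abs, abs_of_pos hs]
    have hspos : (0:ℝ) < s ^ p := pow_pos hs p
    have htppos : (0:ℝ) < t ^ p := pow_pos hts p
    have htp : t ^ p ≤ t := pow_le_of_le_one hts.le ht1.le hp.ne'
    have hsp : s ^ p ≤ s := pow_le_of_le_one hs.le hs1.le hp.ne'
    have hsptp : s ^ p < t ^ p := by
      apply pow_lt_pow_left₀ hst hs.le hp.ne'
    have habtp : ‖(t : ℂ) ^ p‖ = t ^ p := by
      rw [norm_pow, habt]
    have habsp : ‖(s : ℂ) ^ p‖ = s ^ p := by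
      rw [norm_pow, habs]
    have hd1 : ‖(t:ℂ) - (s:ℂ)‖ = t - s := by
      rw [← Complex.ofReal_sub, Complex.norm_real, Real.norm_eq_abs, abs_of_pos (by linarith)]
    have hd2 : ‖(t:ℂ)^p - (s:ℂ)^p‖ = t^p - s^p := by
      have : ((t:ℂ)^p - (s:ℂ)^p) = (((t^p - s^p : ℝ)) : ℂ) := by push_cast; ring
      rw [this, Complex.norm_real, Real.norm_eq_abs, abs_of_pos (by linarith)]
    rw [jdist_eq ((t:ℂ)^p) ((s:ℂ)^p) (by rw [habtp]; linarith)
        (pow_ne_zero p (Complex.ofReal_ne_zero.mpr hts.ne'))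
        (by rw [habsp]; linarith) (pow_ne_zero p (Complex.ofReal_ne_zero.mpr hs.ne')),
      jdist_eq (t:ℂ) (s:ℂ) (by rw [habt]; linarith) (Complex.ofReal_ne_zero.mpr hts.ne')
        (by rw [habs]; linarith) (Complex.ofReal_ne_zero.mpr hs.ne')]
    rw [habtp, habsp, habt, habs, hd1, hd2]
    have hm1 : min (min (t^p) (1 - t^p)) (min (s^p) (1 - s^p)) = s^p := by
      rw [min_eq_left (by linarith : t^p ≤ 1 - t^p),
        min_eq_left (by linarith : s^p ≤ 1 - s^p)]
      exact min_eq_right hsptp.le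
    have hm2 : min (min t (1 - t)) (min s (1 - s)) = s := by
      rw [min_eq_left (by linarith : t ≤ 1 - t),
        min_eq_left (by linarith : s ≤ 1 - s)]
      exact min_eq_right hst.le
    rw [hm1, hm2]
    have he1 : 1 + (t^p - s^p) / s^p = (t/s)^p := by
      rw [div_pow]
      field_simp; ring
    have he2 : 1 + (t - s) / s = t/s := by
      field_simp; ring
    rw [he1, he2, Real.log_pow]
end

section
/- Let (a_k)_{k≥0} be a sequence of complex numbers with Σ_{k=0}^{∞} |a_k| ≤ 1, and let f(z) = Σ_{k=0}^{∞} a_k z^k be non-constant on the unit disk, so that f maps 𝔻 into 𝔻. Then for all x, y ∈ 𝔻: j_𝔻(f(x), f(y)) ≤ j_𝔻(x, y). The inequality is sharp: for f(z) = z^p with p a positive integer and fixed s ∈ (0,1), the ratio j_𝔻(f(t), f(s)) / j_𝔻(t, s) tends to 1 as t → 1⁻. -/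
open Metric Filter Topology Set

lemma infDist_sphere_one (x : ℂ) (hx : ‖x‖ ≤ 1) :
    Metric.infDist x (Metric.sphere (0:ℂ) 1) = 1 - ‖x‖ := by
  have hne : (Metric.sphere (0:ℂ) 1).Nonempty := ⟨1, by simp⟩
  apply le_antisymm
  · rcases eq_or_ne x 0 with h | h
    · subst h
      calc Metric.infDist 0 (Metric.sphere (0:ℂ) 1) ≤ dist 0 (1:ℂ) := by
            apply Metric.infDist_le_dist_of_mem; simp
        _ = 1 - ‖(0:ℂ)‖ := by simp
    · have hxn : (0:ℝ) < ‖x‖ := norm_pos_iff.mpr h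
      have hxe : (x : ℂ) ≠ 0 := h
      have habs : ‖x‖ ≠ 0 := norm_ne_zero_iff.mpr h
      have hmem : (‖x‖⁻¹ : ℂ) * x ∈ Metric.sphere (0:ℂ) 1 := by
        simp only [Metric.mem_sphere, dist_zero_right, norm_mul]
        rw [norm_inv, Complex.norm_real, Real.norm_eq_abs, abs_of_pos hxn]
        exact inv_mul_cancel₀ hxn.ne'
      have hinv : (1:ℝ) ≤ ‖x‖⁻¹ := one_le_inv_iff₀.mpr ⟨hxn, hx⟩
      calc Metric.infDist x (Metric.sphere (0:ℂ) 1) ≤ dist x ((‖x‖⁻¹ : ℂ) * x) :=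
            Metric.infDist_le_dist_of_mem hmem
        _ = ‖(1 - (‖x‖⁻¹:ℂ)) * x‖ := by rw [dist_eq_norm]; ring_nf
        _ = |1 - ‖x‖⁻¹| * ‖x‖ := by
            rw [norm_mul]
            congr 1
            rw [← Complex.ofReal_inv, ← Complex.ofReal_one, ← Complex.ofReal_sub,
              Complex.norm_real, Real.norm_eq_abs]
        _ = 1 - ‖x‖ := by
            rw [abs_of_nonpos (by linarith : 1 - ‖x‖⁻¹ ≤ 0)]
            field_simp
            ring
  · refine le_of_not_gt fun hlt => ?_
    obtain ⟨z, hz, hdz⟩ := (Metric.infDist_lt_iff hne).mp hlt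
    have hz1 : ‖z‖ = 1 := by simpa using hz
    have : ‖z‖ - ‖x‖ ≤ ‖z - x‖ := norm_sub_norm_le z x
    rw [dist_eq_norm, norm_sub_rev] at hdz
    linarith [hz1 ▸ this]

lemma jdist_ball_eq (x y : ℂ) (hx : ‖x‖ ≤ 1) (hy : ‖y‖ ≤ 1) :
    jdist (Metric.ball (0:ℂ) 1) x y
      = Real.log (1 + dist x y / (1 - max ‖x‖ ‖y‖)) := by
  rw [jdist, frontier_ball (0:ℂ) one_ne_zero, infDist_sphere_one x hx,
    infDist_sphere_one y hy]
  congr 2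
  rcases le_total ‖x‖ ‖y‖ with h | h
  · rw [max_eq_right h, min_eq_right (by linarith)]
  · rw [max_eq_left h, min_eq_left (by linarith)]

lemma pow_sub_pow_norm_le (x y : ℂ) (k : ℕ) (m : ℝ) (hx : ‖x‖ ≤ m) (hy : ‖y‖ ≤ m)
    (hm : m ≤ 1) : ‖x ^ k - y ^ k‖ ≤ ‖x - y‖ * ∑ i ∈ Finset.range k, m ^ i := by
  have hm0 : 0 ≤ m := le_trans (norm_nonneg x) hx
  have hfac := geom_sum₂_mul x y k
  calc ‖x ^ k - y ^ k‖ = ‖(∑ i ∈ Finset.range k, x ^ i * y ^ (k - 1 - i)) * (x - y)‖ := by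
        rw [hfac]
    _ = ‖∑ i ∈ Finset.range k, x ^ i * y ^ (k - 1 - i)‖ * ‖x - y‖ := norm_mul _ _
    _ ≤ (∑ i ∈ Finset.range k, m ^ i) * ‖x - y‖ := by
        apply mul_le_mul_of_nonneg_right _ (norm_nonneg _)
        refine le_trans (norm_sum_le _ _) (Finset.sum_le_sum fun i hi => ?_)
        rw [norm_mul, norm_pow, norm_pow]
        calc ‖x‖ ^ i * ‖y‖ ^ (k - 1 - i) ≤ m ^ i * m ^ (k - 1 - i) := by
              apply mul_le_mul (pow_le_pow_left₀ (norm_nonneg _) hx i)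
                (pow_le_pow_left₀ (norm_nonneg _) hy _) (by positivity) (by positivity)
          _ ≤ m ^ i * 1 := by
              apply mul_le_mul_of_nonneg_left (pow_le_one₀ hm0 hm) (by positivity)
          _ = m ^ i := mul_one _
    _ = ‖x - y‖ * ∑ i ∈ Finset.range k, m ^ i := mul_comm _ _

lemma fdiff_bound (a : ℕ → ℂ) (hs : Summable fun k => ‖a k‖) (x y : ℂ)
    (m : ℝ) (hx : ‖x‖ ≤ m) (hy : ‖y‖ ≤ m) (hm : m < 1) :
    ‖(∑' k, a k * x ^ k) - ∑' k, a k * y ^ k‖ ≤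
      ‖x - y‖ / (1 - m) * ((∑' k, ‖a k‖) - ∑' k, ‖a k‖ * m ^ k) := by
  have hm0 : 0 ≤ m := le_trans (norm_nonneg x) hx
  have hxb : ‖x‖ ≤ 1 := hx.trans hm.le
  have hyb : ‖y‖ ≤ 1 := hy.trans hm.le
  have hsx : Summable fun k => a k * x ^ k := by
    apply Summable.of_norm_bounded hs
    intro k
    rw [norm_mul, norm_pow]
    exact mul_le_of_le_one_right (norm_nonneg _) (pow_le_one₀ (norm_nonneg _) hxb)
  have hsy : Summable fun k => a k * y ^ k := by
    apply Summable.of_norm_bounded hs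
    intro k
    rw [norm_mul, norm_pow]
    exact mul_le_of_le_one_right (norm_nonneg _) (pow_le_one₀ (norm_nonneg _) hyb)
  have hsmk : Summable fun k => ‖a k‖ * (1 - m ^ k) := by
    apply Summable.of_nonneg_of_le (fun k => ?_) (fun k => ?_) hs
    · have : m ^ k ≤ 1 := pow_le_one₀ hm0 hm.le
      exact mul_nonneg (norm_nonneg _) (by linarith)
    · have : m ^ k ≤ 1 := pow_le_one₀ hm0 hm.le
      have h1 : 0 ≤ m ^ k := by positivity
      nlinarith [norm_nonneg (a k)]
  have hsm : Summable fun k => ‖a k‖ * m ^ k := by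
    apply Summable.of_nonneg_of_le (fun k => by positivity) (fun k => ?_) hs
    exact mul_le_of_le_one_right (norm_nonneg _) (pow_le_one₀ hm0 hm.le)
  rw [← Summable.tsum_sub hsx hsy]
  have hterm : ∀ k, ‖a k * x ^ k - a k * y ^ k‖ ≤
      ‖x - y‖ / (1 - m) * (‖a k‖ * (1 - m ^ k)) := by
    intro k
    rw [← mul_sub, norm_mul]
    have h1 := pow_sub_pow_norm_le x y k m hx hy hm.le
    have h2 : ∑ i ∈ Finset.range k, m ^ i = (1 - m ^ k) / (1 - m) := by
      rw [geom_sum_eq (by linarith : m ≠ 1)]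
      rw [div_eq_div_iff (by linarith) (by linarith)]
      ring
    have h3 : ‖(a k : ℂ)‖ = ‖a k‖ := rfl
    calc ‖a k‖ * ‖x ^ k - y ^ k‖ ≤ ‖a k‖ * (‖x - y‖ * ((1 - m ^ k) / (1 - m))) := by
          apply mul_le_mul_of_nonneg_left _ (norm_nonneg _)
          rw [← h2]; exact h1
      _ = ‖x - y‖ / (1 - m) * (‖a k‖ * (1 - m ^ k)) := by
          rw [h3]; ring
  calc ‖∑' k, (a k * x ^ k - a k * y ^ k)‖
      ≤ ∑' k, ‖x - y‖ / (1 - m) * (‖a k‖ * (1 - m ^ k)) := by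
        apply tsum_of_norm_bounded (g := fun k => ‖x - y‖ / (1 - m) * (‖a k‖ * (1 - m ^ k))) (hsmk.mul_left _).hasSum hterm
    _ = ‖x - y‖ / (1 - m) * ∑' k, ‖a k‖ * (1 - m ^ k) := tsum_mul_left
    _ = ‖x - y‖ / (1 - m) * ((∑' k, ‖a k‖) - ∑' k, ‖a k‖ * m ^ k) := by
        congr 1
        rw [← Summable.tsum_sub hs hsm]
        apply tsum_congr
        intro k; ring

lemma part1 (a : ℕ → ℂ)
    (hsummable : Summable fun k => ‖a k‖)
    (hsum : ∑' k, ‖a k‖ ≤ 1)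
    (f : ℂ → ℂ) (hf : ∀ z, f z = ∑' k, a k * z ^ k)
    (hnc : ¬ ∀ x ∈ Metric.ball (0 : ℂ) 1, ∀ y ∈ Metric.ball (0 : ℂ) 1, f x = f y) :
    ∀ x ∈ Metric.ball (0 : ℂ) 1, ∀ y ∈ Metric.ball (0 : ℂ) 1,
      jdist (Metric.ball (0 : ℂ) 1) (f x) (f y) ≤ jdist (Metric.ball (0 : ℂ) 1) x y := by
  have hex : ∃ k, 1 ≤ k ∧ a k ≠ 0 := by
    by_contra h
    push_neg at h
    apply hnc
    intro x _ y _
    have hz : ∀ z : ℂ, f z = a 0 := by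
      intro z
      rw [hf z, tsum_eq_single 0 (fun b hb => by
        rw [h b (Nat.one_le_iff_ne_zero.mpr hb)]; simp)]
      simp
    rw [hz x, hz y]
  obtain ⟨k₀, hk₀, hak₀⟩ := hex
  intro x hx y hy
  rw [Metric.mem_ball, dist_zero_right] at hx hy
  set m : ℝ := max ‖x‖ ‖y‖ with hmdef
  have hm : m < 1 := max_lt hx hy
  have hm0 : 0 ≤ m := le_trans (norm_nonneg x) (le_max_left _ _)
  have hxm : ‖x‖ ≤ m := le_max_left _ _
  have hym : ‖y‖ ≤ m := le_max_right _ _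
  have hsm : Summable fun k => ‖a k‖ * m ^ k := by
    apply Summable.of_nonneg_of_le (fun k => by positivity) (fun k => ?_) hsummable
    exact mul_le_of_le_one_right (norm_nonneg _) (pow_le_one₀ hm0 hm.le)
  set S : ℝ := ∑' k, ‖a k‖ * m ^ k with hSdef
  have hS_lt : S < 1 := by
    have h1 : S < ∑' k, ‖a k‖ := by
      apply Summable.tsum_lt_tsum_of_nonneg (i := k₀) (fun k => by positivity)
        (fun k => mul_le_of_le_one_right (norm_nonneg _) (pow_le_one₀ hm0 hm.le))
        ?_ hsummable
      have hmk : m ^ k₀ < 1 :=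
        pow_lt_one₀ hm0 hm (Nat.one_le_iff_ne_zero.mp hk₀)
      have ha : 0 < ‖a k₀‖ := norm_pos_iff.mpr hak₀
      nlinarith [pow_nonneg hm0 k₀]
    linarith
  have hS0 : 0 ≤ S := tsum_nonneg (fun k => by positivity)
  have hfb : ∀ z : ℂ, ‖z‖ ≤ m → ‖f z‖ ≤ S := by
    intro z hz
    rw [hf z]
    apply tsum_of_norm_bounded hsm.hasSum
    intro k
    rw [norm_mul, norm_pow]
    exact mul_le_mul_of_nonneg_left (pow_le_pow_left₀ (norm_nonneg _) hz k)
      (norm_nonneg _)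
  have hfx : ‖f x‖ ≤ S := hfb x hxm
  have hfy : ‖f y‖ ≤ S := hfb y hym
  rw [jdist_ball_eq _ _ (hfx.trans hS_lt.le) (hfy.trans hS_lt.le),
    jdist_ball_eq _ _ hx.le hy.le]
  have hMf : max ‖f x‖ ‖f y‖ ≤ S := max_le hfx hfy
  have hpos1 : (0:ℝ) < 1 - S := by linarith
  have hpos2 : (0:ℝ) < 1 - max ‖f x‖ ‖f y‖ := by
    have := hMf; linarith
  have hpos3 : (0:ℝ) < 1 - m := by linarith
  have hd : dist (f x) (f y) ≤ dist x y / (1 - m) * (1 - S) := by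
    rw [dist_eq_norm, dist_eq_norm, hf x, hf y]
    refine le_trans (fdiff_bound a hsummable x y m hxm hym hm) ?_
    apply mul_le_mul_of_nonneg_left _ (by positivity)
    linarith
  have hkey : dist (f x) (f y) / (1 - max ‖f x‖ ‖f y‖) ≤ dist x y / (1 - m) := by
    calc dist (f x) (f y) / (1 - max ‖f x‖ ‖f y‖)
        ≤ (dist x y / (1 - m) * (1 - S)) / (1 - S) := by
          apply div_le_div₀ (by positivity) hd hpos1 (by linarith)
      _ = dist x y / (1 - m) := by
          rw [mul_div_assoc, div_self hpos1.ne', mul_one]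
  apply Real.log_le_log (by positivity)
  linarith

lemma part2 (p : ℕ) (hp : 0 < p) (s : ℝ) (hs : s ∈ Set.Ioo (0:ℝ) 1) :
    Tendsto (fun t : ℝ =>
        jdist (Metric.ball (0 : ℂ) 1) ((t : ℂ) ^ p) ((s : ℂ) ^ p) /
          jdist (Metric.ball (0 : ℂ) 1) (t : ℂ) (s : ℂ))
      (𝓝[<] 1) (𝓝 1) := by
  obtain ⟨hs0, hs1⟩ := hs
  set g : ℝ → ℝ := fun t => ∑ i ∈ Finset.range p, t ^ i with hgdef
  set C1 : ℝ := Real.log (1 - s ^ p) with hC1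
  set C2 : ℝ := Real.log (1 - s) with hC2
  set D : ℝ → ℝ := fun t => C2 - Real.log (1 - t) with hDdef
  set A : ℝ → ℝ := fun t => C1 - C2 - Real.log (g t) with hAdef
  -- D tends to atTop
  have h1 : Tendsto (fun t : ℝ => 1 - t) (𝓝[<] 1) (𝓝[>] 0) := by
    apply tendsto_nhdsWithin_of_tendsto_nhds_of_eventually_within
    · have hc : Continuous (fun t : ℝ => 1 - t) := continuous_const.sub continuous_id
      have : Tendsto (fun t : ℝ => 1 - t) (𝓝 1) (𝓝 0) := by
        simpa using hc.tendsto 1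
      exact this.mono_left nhdsWithin_le_nhds
    · filter_upwards [self_mem_nhdsWithin] with t ht
      simp only [mem_Iio] at ht
      simp [mem_Ioi]; linarith
  have h2 : Tendsto (fun t : ℝ => Real.log (1 - t)) (𝓝[<] 1) atBot :=
    Real.tendsto_log_nhdsGT_zero.comp h1
  have hD : Tendsto D (𝓝[<] 1) atTop := by
    have h3 : Tendsto (fun t : ℝ => -Real.log (1 - t)) (𝓝[<] 1) atTop :=
      tendsto_neg_atBot_atTop.comp h2
    have := tendsto_atTop_add_const_left (𝓝[<] (1:ℝ)) C2 h3
    simpa [hDdef, sub_eq_add_neg] using this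
  -- A tends to a constant
  have hgcont : Continuous g := by
    apply continuous_finset_sum
    intro i _
    exact continuous_pow i
  have hg1 : g 1 = p := by simp [hgdef]
  have hglim : Tendsto (fun t => Real.log (g t)) (𝓝[<] 1) (𝓝 (Real.log p)) := by
    have hgt : Tendsto g (𝓝 1) (𝓝 (p : ℝ)) := hg1 ▸ hgcont.tendsto 1
    have hlog : ContinuousAt Real.log (p : ℝ) :=
      Real.continuousAt_log (by positivity)
    exact (hlog.tendsto.comp hgt).mono_left nhdsWithin_le_nhds
  have hA : Tendsto A (𝓝[<] 1) (𝓝 (C1 - C2 - Real.log p)) :=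
    tendsto_const_nhds.sub hglim
  have hAD : Tendsto (fun t => A t / D t) (𝓝[<] 1) (𝓝 0) := hA.div_atTop hD
  have hfinal : Tendsto (fun t => 1 + A t / D t) (𝓝[<] 1) (𝓝 1) := by
    have := (tendsto_const_nhds (x := (1:ℝ)) (f := 𝓝[<] (1:ℝ))).add hAD
    simpa using this
  apply Tendsto.congr' _ hfinal
  have hIoo : Ioo s 1 ∈ 𝓝[<] (1:ℝ) := Ioo_mem_nhdsLT_of_mem ⟨hs1, le_refl 1⟩
  filter_upwards [hIoo] with t ht
  obtain ⟨hst, ht1⟩ := ht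
  have ht0 : 0 < t := hs0.trans hst
  have h1t : 0 < 1 - t := by linarith
  have h1s : 0 < 1 - s := by linarith
  have htp1 : t ^ p < 1 := pow_lt_one₀ ht0.le ht1 hp.ne'
  have hsp1 : s ^ p < 1 := pow_lt_one₀ hs0.le hs1 hp.ne'
  have hstp : s ^ p < t ^ p := pow_lt_pow_left₀ hst hs0.le hp.ne'
  have htp0 : 0 < t ^ p := pow_pos ht0 p
  have hsp0 : 0 < s ^ p := pow_pos hs0 p
  have hgpos : 0 < g t :=
    Finset.sum_pos (fun i _ => pow_pos ht0 i) ⟨0, Finset.mem_range.mpr hp⟩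
  have hnt : ‖(t:ℂ)‖ = t := by
    rw [Complex.norm_real, Real.norm_eq_abs, abs_of_pos ht0]
  have hns : ‖(s:ℂ)‖ = s := by
    rw [Complex.norm_real, Real.norm_eq_abs, abs_of_pos hs0]
  have hntp : ‖(t:ℂ) ^ p‖ = t ^ p := by rw [norm_pow, hnt]
  have hnsp : ‖(s:ℂ) ^ p‖ = s ^ p := by rw [norm_pow, hns]
  have hD0 : 0 < D t := by
    simp only [hDdef, hC2]
    have : Real.log (1 - t) < Real.log (1 - s) :=
      Real.log_lt_log h1t (by linarith)
    linarith
  have hjden : jdist (Metric.ball (0 : ℂ) 1) (t:ℂ) (s:ℂ) = D t := by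
    rw [jdist_ball_eq _ _ (by rw [hnt]; linarith) (by rw [hns]; linarith)]
    rw [hnt, hns, max_eq_left (by linarith : s ≤ t)]
    have hdist : dist (t:ℂ) (s:ℂ) = t - s := by
      rw [dist_eq_norm, ← Complex.ofReal_sub, Complex.norm_real, Real.norm_eq_abs,
        abs_of_pos (by linarith)]
    rw [hdist]
    have harg : 1 + (t - s) / (1 - t) = (1 - s) / (1 - t) := by
      field_simp
      ring
    rw [harg, Real.log_div h1s.ne' h1t.ne']
  have hfact : 1 - t ^ p = (1 - t) * g t := by
    have h := geom_sum_mul t p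
    simp only [hgdef]
    linear_combination h
  have hjnum : jdist (Metric.ball (0 : ℂ) 1) ((t:ℂ) ^ p) ((s:ℂ) ^ p) = D t + A t := by
    rw [jdist_ball_eq _ _ (by rw [hntp]; linarith) (by rw [hnsp]; linarith)]
    rw [hntp, hnsp, max_eq_left hstp.le]
    have hdist : dist ((t:ℂ) ^ p) ((s:ℂ) ^ p) = t ^ p - s ^ p := by
      rw [dist_eq_norm, show (t:ℂ) ^ p - (s:ℂ) ^ p = ((t ^ p - s ^ p : ℝ) : ℂ) by push_cast; ring,
        Complex.norm_real, Real.norm_eq_abs, abs_of_pos (by linarith)]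
    rw [hdist]
    have hne : (1:ℝ) - t ^ p ≠ 0 := by linarith
    have harg : 1 + (t ^ p - s ^ p) / (1 - t ^ p) = (1 - s ^ p) / (1 - t ^ p) := by
      field_simp
      ring
    rw [harg, Real.log_div (by linarith) (by linarith)]
    have hlogmul : Real.log (1 - t ^ p) = Real.log (1 - t) + Real.log (g t) := by
      rw [hfact, Real.log_mul h1t.ne' hgpos.ne']
    simp only [hAdef, hDdef, hC1, hC2]
    rw [hlogmul]
    ring
  rw [hjden, hjnum, add_div, div_self hD0.ne']

/-- If `f(z) = Σ_{k=0}^∞ a_k z^k` with `Σ |a_k| ≤ 1` is non-constant on the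
unit disk, then `j_𝔻(f x, f y) ≤ j_𝔻(x, y)` for all `x, y ∈ 𝔻`. The
inequality is sharp: for `f(z) = z^p` and fixed `s ∈ (0,1)` the ratio
`j_𝔻(f t, f s)/j_𝔻(t, s)` tends to `1` as `t → 1⁻`. -/
theorem power_series_disk_jdist_contraction_sharp (a : ℕ → ℂ)
    (hsummable : Summable fun k => ‖a k‖)
    (hsum : ∑' k, ‖a k‖ ≤ 1)
    (f : ℂ → ℂ) (hf : ∀ z, f z = ∑' k, a k * z ^ k)
    (hnc : ¬ ∀ x ∈ Metric.ball (0 : ℂ) 1, ∀ y ∈ Metric.ball (0 : ℂ) 1, f x = f y) :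
    (∀ x ∈ Metric.ball (0 : ℂ) 1, ∀ y ∈ Metric.ball (0 : ℂ) 1,
        jdist (Metric.ball (0 : ℂ) 1) (f x) (f y) ≤ jdist (Metric.ball (0 : ℂ) 1) x y) ∧
      ∀ p : ℕ, 0 < p → ∀ s : ℝ, s ∈ Set.Ioo (0 : ℝ) 1 →
        Tendsto (fun t : ℝ =>
            jdist (Metric.ball (0 : ℂ) 1) ((t : ℂ) ^ p) ((s : ℂ) ^ p) /
              jdist (Metric.ball (0 : ℂ) 1) (t : ℂ) (s : ℂ))
          (𝓝[<] 1) (𝓝 1) :=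
  ⟨part1 a hsummable hsum f hf hnc, fun p hp s hs => part2 p hp s hs⟩
end

section
/- Let n ≥ 2, let a ∈ ℝ^n lie in the boundary hyperplane of the upper half space (i.e., the n-th coordinate of a is 0), let r > 0, and let f(x) = a + r²(x − a)/|x − a|² be the inversion in the sphere S^{n−1}(a, r). Then f maps ℍⁿ onto ℍⁿ, and for all x, y ∈ ℍⁿ: j_{ℍⁿ}(f(x), f(y)) ≤ 2 · j_{ℍⁿ}(x, y). The constant 2 is best possible: taking a = 0, r = 1, x = e_n and y = t·e₁ + e_n, the ratio j_{ℍⁿ}(f(x), f(y)) / j_{ℍⁿ}(x, y) tends to 2 as t → ∞. -/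
open Metric Filter Topology Set

section Aux

variable {n : ℕ}

lemma abs_coord_le_dist (i : Fin n) (x y : EuclideanSpace ℝ (Fin n)) :
    |x i - y i| ≤ dist x y := by
  rw [EuclideanSpace.dist_eq, ← Real.sqrt_sq_eq_abs]
  apply Real.sqrt_le_sqrt
  have h : (x i - y i) ^ 2 = dist (x i) (y i) ^ 2 := by rw [Real.dist_eq, sq_abs]
  rw [h]
  exact Finset.single_le_sum (f := fun j => dist (x j) (y j) ^ 2)
    (fun j _ => sq_nonneg _) (Finset.mem_univ i)

lemma frontier_halfspace' (i : Fin n) :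
    frontier {x : EuclideanSpace ℝ (Fin n) | 0 < x i} = {x | x i = 0} := by
  set p : EuclideanSpace ℝ (Fin n) →L[ℝ] ℝ := EuclideanSpace.proj i with hp
  have hproj : {x : EuclideanSpace ℝ (Fin n) | 0 < x i} = p ⁻¹' (Ioi 0) := rfl
  have hsurj : Function.Surjective p := by
    intro c
    exact ⟨EuclideanSpace.single i c, by simp [hp]⟩
  have hopen : IsOpenMap p := ContinuousLinearMap.isOpenMap _ hsurj
  rw [hproj, ← hopen.preimage_frontier_eq_frontier_preimage p.continuous, frontier_Ioi]
  rfl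

lemma infDist_halfspace (i : Fin n) (x : EuclideanSpace ℝ (Fin n)) :
    infDist x {y : EuclideanSpace ℝ (Fin n) | y i = 0} = |x i| := by
  apply le_antisymm
  · have hmem : x - EuclideanSpace.single i (x i) ∈ {y : EuclideanSpace ℝ (Fin n) | y i = 0} := by
      simp [PiLp.sub_apply]
    refine le_trans (infDist_le_dist_of_mem hmem) ?_
    rw [dist_eq_norm]
    simp
  · by_contra hlt
    push_neg at hlt
    obtain ⟨y, hy, hdy⟩ := (infDist_lt_iff (⟨0, by simp⟩ : Set.Nonempty _)).1 hlt
    have h2 := abs_coord_le_dist i x y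
    rw [hy, sub_zero] at h2
    linarith

lemma jdist_halfspace_eq (i : Fin n) (x y : EuclideanSpace ℝ (Fin n))
    (hx : 0 < x i) (hy : 0 < y i) :
    jdist {z : EuclideanSpace ℝ (Fin n) | 0 < z i} x y =
      Real.log (1 + dist x y / min (x i) (y i)) := by
  unfold jdist
  rw [frontier_halfspace', infDist_halfspace, infDist_halfspace, abs_of_pos hx, abs_of_pos hy]

lemma inv_coord (i : Fin n) (a : EuclideanSpace ℝ (Fin n)) (ha : a i = 0) (r : ℝ)
    (x : EuclideanSpace ℝ (Fin n)) :
    (EuclideanGeometry.inversion a r x) i = (r / dist x a) ^ 2 * x i := by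
  simp [EuclideanGeometry.inversion, vsub_eq_sub, vadd_eq_add, PiLp.add_apply,
    PiLp.smul_apply, PiLp.sub_apply, ha, smul_eq_mul]

lemma coord_le_dist (i : Fin n) (a x : EuclideanSpace ℝ (Fin n)) (ha : a i = 0)
    (hx : 0 < x i) : x i ≤ dist x a := by
  have := abs_coord_le_dist i x a
  rw [ha, sub_zero, abs_of_pos hx] at this
  exact this

set_option maxHeartbeats 1000000 in
lemma part2_s18 (i : Fin n) (a : EuclideanSpace ℝ (Fin n)) (ha : a i = 0) {r : ℝ} (hr : 0 < r)
    (x y : EuclideanSpace ℝ (Fin n)) (hx : 0 < x i) (hy : 0 < y i) :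
    jdist {z : EuclideanSpace ℝ (Fin n) | 0 < z i}
      (EuclideanGeometry.inversion a r x) (EuclideanGeometry.inversion a r y)
      ≤ 2 * jdist {z : EuclideanSpace ℝ (Fin n) | 0 < z i} x y := by
  have hxa : x ≠ a := fun h => by rw [h, ha] at hx; exact lt_irrefl 0 hx
  have hya : y ≠ a := fun h => by rw [h, ha] at hy; exact lt_irrefl 0 hy
  set X := dist x a with hX
  set Y := dist y a with hY
  have hX0 : 0 < X := dist_pos.2 hxa
  have hY0 : 0 < Y := dist_pos.2 hya
  set dx := x i
  set dy := y i
  have hdxX : dx ≤ X := coord_le_dist i a x ha hx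
  have hdyY : dy ≤ Y := coord_le_dist i a y ha hy
  have hfx : (EuclideanGeometry.inversion a r x) i = (r / X) ^ 2 * dx := inv_coord i a ha r x
  have hfy : (EuclideanGeometry.inversion a r y) i = (r / Y) ^ 2 * dy := inv_coord i a ha r y
  have hfx0 : 0 < (EuclideanGeometry.inversion a r x) i := by
    rw [hfx]; positivity
  have hfy0 : 0 < (EuclideanGeometry.inversion a r y) i := by
    rw [hfy]; positivity
  rw [jdist_halfspace_eq i _ _ hfx0 hfy0, jdist_halfspace_eq i x y hx hy]
  set u := dist x y with hu
  have hu0 : 0 ≤ u := dist_nonneg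
  set m := min dx dy with hm
  have hm0 : 0 < m := lt_min hx hy
  have hmx : m ≤ dx := min_le_left _ _
  have hmy : m ≤ dy := min_le_right _ _
  have hD : dist (EuclideanGeometry.inversion a r x) (EuclideanGeometry.inversion a r y)
      = r ^ 2 / (X * Y) * u := EuclideanGeometry.dist_inversion_inversion hxa hya r
  have hXY : X ≤ Y + u := by
    have h := dist_triangle x y a
    linarith [hX, hY, hu, h]
  have hYX : Y ≤ X + u := by
    have h := dist_triangle y x a
    have h2 : dist y x = dist x y := dist_comm y x
    linarith [hX, hY, hu, h, h2]
  have hlog : 2 * Real.log (1 + u / m) = Real.log ((1 + u / m) ^ 2) := by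
    rw [Real.log_pow]; push_cast; ring
  rw [hfx, hfy, hD, hlog]
  clear_value X Y dx dy u m
  apply Real.log_le_log (by positivity)
  have hmin : r ^ 2 / (X * Y) * u / min ((r / X) ^ 2 * dx) ((r / Y) ^ 2 * dy)
      ≤ u / m * (1 + u / m) := by
    rcases min_cases ((r / X) ^ 2 * dx) ((r / Y) ^ 2 * dy) with ⟨h1, _⟩ | ⟨h1, _⟩ <;> rw [h1]
    · have heq : r ^ 2 / (X * Y) * u / ((r / X) ^ 2 * dx) = u * X / (dx * Y) := by
        field_simp
      have hrhs : u / m * (1 + u / m) = u * (m + u) / (m * m) := by field_simp; try ring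
      rw [heq, hrhs, div_le_div_iff₀ (by positivity) (by positivity)]
      have s1 : u * X * (m * m) ≤ u * (Y + u) * (m * m) :=
        mul_le_mul_of_nonneg_right (mul_le_mul_of_nonneg_left hXY hu0) (by positivity)
      have s2 : u * Y * m * m ≤ u * Y * m * dx :=
        mul_le_mul_of_nonneg_left hmx (by positivity)
      have s3 : u * u * (m * m) ≤ u * u * (dx * Y) :=
        mul_le_mul_of_nonneg_left
          (mul_le_mul hmx (hmy.trans hdyY) hm0.le (hm0.le.trans hmx)) (by positivity)
      linarith [s1, s2, s3]
    · have heq : r ^ 2 / (X * Y) * u / ((r / Y) ^ 2 * dy) = u * Y / (dy * X) := by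
        field_simp
      have hrhs : u / m * (1 + u / m) = u * (m + u) / (m * m) := by field_simp; try ring
      rw [heq, hrhs, div_le_div_iff₀ (by positivity) (by positivity)]
      have s1 : u * Y * (m * m) ≤ u * (X + u) * (m * m) :=
        mul_le_mul_of_nonneg_right (mul_le_mul_of_nonneg_left hYX hu0) (by positivity)
      have s2 : u * X * m * m ≤ u * X * m * dy :=
        mul_le_mul_of_nonneg_left hmy (by positivity)
      have s3 : u * u * (m * m) ≤ u * u * (dy * X) :=
        mul_le_mul_of_nonneg_left
          (mul_le_mul hmy (hmx.trans hdxX) hm0.le (hm0.le.trans hmy)) (by positivity)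
      linarith [s1, s2, s3]
  have hum : 0 ≤ u / m := by positivity
  nlinarith [hmin]

lemma part1_s18 (i : Fin n) (a : EuclideanSpace ℝ (Fin n)) (ha : a i = 0) {r : ℝ} (hr : 0 < r) :
    EuclideanGeometry.inversion a r '' {x : EuclideanSpace ℝ (Fin n) | 0 < x i} =
      {x : EuclideanSpace ℝ (Fin n) | 0 < x i} := by
  have key : ∀ x : EuclideanSpace ℝ (Fin n), 0 < x i →
      0 < (EuclideanGeometry.inversion a r x) i := by
    intro x hx
    have hxa : x ≠ a := fun h => by rw [h, ha] at hx; exact lt_irrefl 0 hx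
    rw [inv_coord i a ha r x]
    have hd : 0 < dist x a := dist_pos.2 hxa
    positivity
  apply Set.Subset.antisymm
  · rintro _ ⟨x, hx, rfl⟩; exact key x hx
  · intro y hy
    have hya : y ≠ a := by
      intro h
      rw [h] at hy
      simp only [Set.mem_setOf_eq, ha] at hy
      exact lt_irrefl 0 hy
    exact ⟨EuclideanGeometry.inversion a r y, key y hy,
      EuclideanGeometry.inversion_inversion a hr.ne' y⟩

lemma norm_sq_combo (i j : Fin n) (hij : j ≠ i) (s c : ℝ) :
    ‖s • (EuclideanSpace.single j (1:ℝ)) + c • (EuclideanSpace.single i (1:ℝ))‖ ^ 2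
      = s ^ 2 + c ^ 2 := by
  have h0 : (inner ℝ (EuclideanSpace.single j (1:ℝ)) (EuclideanSpace.single i (1:ℝ)) : ℝ) = 0 := by
    rw [EuclideanSpace.inner_single_left]
    simp [EuclideanSpace.single_apply, hij, hij.symm]
  rw [norm_add_sq_real, real_inner_smul_left, real_inner_smul_right, h0, norm_smul, norm_smul]
  simp [EuclideanSpace.norm_single, mul_pow, sq_abs]
  try ring

lemma numer_eq (i j : Fin n) (hij : j ≠ i) {t : ℝ} (ht : 1 ≤ t) :
    jdist {x : EuclideanSpace ℝ (Fin n) | 0 < x i}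
        ((‖(EuclideanSpace.single i (1 : ℝ))‖ ^ 2)⁻¹ • EuclideanSpace.single i (1 : ℝ))
        ((‖t • EuclideanSpace.single j (1 : ℝ) + EuclideanSpace.single i (1 : ℝ)‖ ^ 2)⁻¹ •
          (t • EuclideanSpace.single j (1 : ℝ) + EuclideanSpace.single i (1 : ℝ)))
      = Real.log (1 + t * Real.sqrt (t ^ 2 + 1)) := by
  have ht0 : 0 < t := lt_of_lt_of_le one_pos ht
  set E := EuclideanSpace.single i (1 : ℝ) with hE
  set E0 := EuclideanSpace.single j (1 : ℝ) with hE0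
  have hnormE : ‖E‖ = 1 := by simp [hE, EuclideanSpace.norm_single]
  have hE2 : (‖E‖ ^ 2)⁻¹ • E = E := by rw [hnormE]; norm_num
  have h0 : (inner ℝ E0 E : ℝ) = 0 := by
    rw [hE0, hE, EuclideanSpace.inner_single_left]
    simp [EuclideanSpace.single_apply, hij, hij.symm]
  have hnormE0 : ‖E0‖ = 1 := by simp [hE0, EuclideanSpace.norm_single]
  have hN : ‖t • E0 + E‖ ^ 2 = t ^ 2 + 1 := by
    rw [norm_add_sq_real, real_inner_smul_left, h0, norm_smul, hnormE, hnormE0]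
    simp [sq_abs]
  have ht1 : (0:ℝ) < t ^ 2 + 1 := by positivity
  rw [hE2, hN]
  set B := (t ^ 2 + 1)⁻¹ • (t • E0 + E) with hB
  have hEi : E i = 1 := by simp [hE, EuclideanSpace.single_apply]
  have hE0i : E0 i = 0 := by simp [hE0, EuclideanSpace.single_apply, hij, hij.symm]
  have hBi : B i = (t ^ 2 + 1)⁻¹ := by
    rw [hB]
    simp only [PiLp.smul_apply, PiLp.add_apply, smul_eq_mul, hEi, hE0i]
    ring
  have hBpos : 0 < B i := by rw [hBi]; positivity
  rw [jdist_halfspace_eq i E B (by rw [hEi]; norm_num) hBpos, hEi, hBi]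
  have hvec : E - B = (-(t * (t ^ 2 + 1)⁻¹)) • E0 + (1 - (t ^ 2 + 1)⁻¹) • E := by
    rw [hB]; module
  have hdist : dist E B = Real.sqrt (t ^ 2 / (t ^ 2 + 1)) := by
    rw [dist_eq_norm, ← Real.sqrt_sq (norm_nonneg (E - B)), hvec,
      norm_sq_combo i j hij]
    congr 1
    field_simp
    ring
  have hmin : min (1:ℝ) ((t ^ 2 + 1)⁻¹) = (t ^ 2 + 1)⁻¹ := by
    apply min_eq_right
    rw [inv_le_one_iff₀]
    right; nlinarith [sq_nonneg t]
  have hs : (0:ℝ) < Real.sqrt (t ^ 2 + 1) := Real.sqrt_pos.2 ht1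
  have hsq : Real.sqrt (t ^ 2 / (t ^ 2 + 1)) = t / Real.sqrt (t ^ 2 + 1) := by
    rw [Real.sqrt_div (by positivity) _, Real.sqrt_sq ht0.le]
  have key : Real.sqrt (t ^ 2 / (t ^ 2 + 1)) / (t ^ 2 + 1)⁻¹ = t * Real.sqrt (t ^ 2 + 1) := by
    rw [hsq, div_inv_eq_mul, div_mul_eq_mul_div, div_eq_iff hs.ne', mul_assoc,
      Real.mul_self_sqrt ht1.le]
  rw [hdist, hmin, key]

lemma denom_eq (i j : Fin n) (hij : j ≠ i) {t : ℝ} (ht : 1 ≤ t) :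
    jdist {x : EuclideanSpace ℝ (Fin n) | 0 < x i}
        (EuclideanSpace.single i (1 : ℝ))
        (t • EuclideanSpace.single j (1 : ℝ) + EuclideanSpace.single i (1 : ℝ))
      = Real.log (1 + t) := by
  have ht0 : 0 < t := lt_of_lt_of_le one_pos ht
  set E := EuclideanSpace.single i (1 : ℝ) with hE
  set E0 := EuclideanSpace.single j (1 : ℝ) with hE0
  have hEi : E i = 1 := by simp [hE, EuclideanSpace.single_apply]
  have hE0i : E0 i = 0 := by simp [hE0, EuclideanSpace.single_apply, hij, hij.symm]
  have hyi : (t • E0 + E) i = 1 := by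
    simp only [PiLp.smul_apply, PiLp.add_apply, smul_eq_mul, hEi, hE0i]
    ring
  rw [jdist_halfspace_eq i _ _ (by rw [hEi]; norm_num) (by rw [hyi]; norm_num), hEi, hyi]
  have hd : dist E (t • E0 + E) = t := by
    rw [dist_eq_norm]
    have : E - (t • E0 + E) = (-t) • E0 := by module
    rw [this, norm_smul]
    simp [hE0, EuclideanSpace.norm_single, abs_of_pos ht0]
  rw [hd]
  norm_num

lemma log_ratio_tendsto :
    Tendsto (fun t : ℝ => Real.log (1 + t * Real.sqrt (t ^ 2 + 1)) / Real.log (1 + t))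
      atTop (𝓝 2) := by
  have hlow : Tendsto (fun t : ℝ => 2 * (Real.log t / Real.log (1 + t))) atTop (𝓝 2) := by
    have h2 : Tendsto (fun t : ℝ => Real.log (1 + t⁻¹) / Real.log (1 + t)) atTop (𝓝 0) := by
      apply Tendsto.div_atTop (f := fun t : ℝ => Real.log (1 + t⁻¹)) (l := atTop) (a := 0)
      · have h3 : Tendsto (fun t : ℝ => 1 + t⁻¹) atTop (𝓝 1) := by
          simpa using (tendsto_const_nhds : Tendsto (fun _ : ℝ => (1:ℝ)) atTop (𝓝 1)).add tendsto_inv_atTop_zero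
        have h4 := (Real.continuousAt_log (x := 1) (by norm_num)).tendsto.comp h3
        simpa [Function.comp_def] using h4
      · exact Real.tendsto_log_atTop.comp (tendsto_atTop_add_const_left _ 1 tendsto_id)
    have h1 : Tendsto (fun t : ℝ => Real.log t / Real.log (1 + t)) atTop (𝓝 1) := by
      have heq : ∀ᶠ t : ℝ in atTop, 1 - Real.log (1 + t⁻¹) / Real.log (1 + t)
          = Real.log t / Real.log (1 + t) := by
        filter_upwards [eventually_gt_atTop 1] with t ht
        have ht0 : (0:ℝ) < t := by linarith
        have hlt : 0 < Real.log (1 + t) := Real.log_pos (by linarith)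
        have hli : Real.log (1 + t⁻¹) = Real.log (1 + t) - Real.log t := by
          rw [← Real.log_div (by positivity) (ne_of_gt ht0)]
          congr 1
          field_simp
          ring
        rw [hli]
        field_simp
        ring
      have := ((tendsto_const_nhds (x := (1:ℝ)) (f := atTop)).sub h2)
      rw [sub_zero] at this
      exact Tendsto.congr' heq this
    have := h1.const_mul (2:ℝ)
    simpa using this
  apply tendsto_of_tendsto_of_tendsto_of_le_of_le' hlow tendsto_const_nhds
  · filter_upwards [eventually_ge_atTop 1] with t ht
    have ht0 : (0:ℝ) < t := by linarith
    have hlt : 0 < Real.log (1 + t) := Real.log_pos (by linarith)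
    have hsq : t ≤ Real.sqrt (t ^ 2 + 1) := by
      have h5 := Real.sqrt_le_sqrt (show t ^ 2 ≤ t ^ 2 + 1 by linarith)
      rwa [Real.sqrt_sq ht0.le] at h5
    have hb : t ^ 2 ≤ 1 + t * Real.sqrt (t ^ 2 + 1) := by nlinarith
    have hlog : 2 * Real.log t ≤ Real.log (1 + t * Real.sqrt (t ^ 2 + 1)) := by
      calc 2 * Real.log t = Real.log (t ^ 2) := by rw [Real.log_pow]; push_cast; ring
        _ ≤ _ := Real.log_le_log (by positivity) hb
    rw [mul_div_assoc']
    gcongr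
  · filter_upwards [eventually_ge_atTop 1] with t ht
    have ht0 : (0:ℝ) < t := by linarith
    have hlt : 0 < Real.log (1 + t) := Real.log_pos (by linarith)
    have hsq : Real.sqrt (t ^ 2 + 1) ≤ t + 1 := by
      rw [← Real.sqrt_sq (by linarith : (0:ℝ) ≤ t + 1)]
      exact Real.sqrt_le_sqrt (by nlinarith)
    have hb : 1 + t * Real.sqrt (t ^ 2 + 1) ≤ (1 + t) ^ 2 := by nlinarith
    have hlog : Real.log (1 + t * Real.sqrt (t ^ 2 + 1)) ≤ 2 * Real.log (1 + t) := by
      calc Real.log (1 + t * Real.sqrt (t ^ 2 + 1)) ≤ Real.log ((1 + t) ^ 2) :=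
            Real.log_le_log (by positivity) hb
        _ = 2 * Real.log (1 + t) := by rw [Real.log_pow]; push_cast; ring
    rw [div_le_iff₀ hlt]
    linarith

end Aux

/-- The inversion `f(x) = a + r²(x-a)/|x-a|²` in a sphere centered on the
boundary hyperplane maps the upper half space `ℍⁿ` onto itself and satisfies
`j_{ℍⁿ}(f x, f y) ≤ 2 j_{ℍⁿ}(x, y)`. The constant `2` is best possible:
for `a = 0`, `r = 1`, `x = eₙ`, `y = t e₁ + eₙ`, the ratio tends to `2` as
`t → ∞`. -/
theorem inversion_halfspace_jdist_lipschitz_sharp (n : ℕ) (hn : 2 ≤ n)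
    (a : EuclideanSpace ℝ (Fin n)) (ha : a ⟨n - 1, by omega⟩ = 0)
    (r : ℝ) (hr : 0 < r)
    (f : EuclideanSpace ℝ (Fin n) → EuclideanSpace ℝ (Fin n))
    (hf : ∀ x, f x = a + (r ^ 2 / ‖x - a‖ ^ 2) • (x - a)) :
    f '' {x : EuclideanSpace ℝ (Fin n) | 0 < x ⟨n - 1, by omega⟩} =
        {x : EuclideanSpace ℝ (Fin n) | 0 < x ⟨n - 1, by omega⟩} ∧
      (∀ x ∈ {x : EuclideanSpace ℝ (Fin n) | 0 < x ⟨n - 1, by omega⟩},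
        ∀ y ∈ {x : EuclideanSpace ℝ (Fin n) | 0 < x ⟨n - 1, by omega⟩},
          jdist {x : EuclideanSpace ℝ (Fin n) | 0 < x ⟨n - 1, by omega⟩} (f x) (f y) ≤
            2 * jdist {x : EuclideanSpace ℝ (Fin n) | 0 < x ⟨n - 1, by omega⟩} x y) ∧
      Tendsto (fun t : ℝ =>
          jdist {x : EuclideanSpace ℝ (Fin n) | 0 < x ⟨n - 1, by omega⟩}
              ((‖(EuclideanSpace.single (⟨n - 1, by omega⟩ : Fin n) (1 : ℝ))‖ ^ 2)⁻¹ •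
                EuclideanSpace.single (⟨n - 1, by omega⟩ : Fin n) (1 : ℝ))
              ((‖t • EuclideanSpace.single (⟨0, by omega⟩ : Fin n) (1 : ℝ) +
                  EuclideanSpace.single (⟨n - 1, by omega⟩ : Fin n) (1 : ℝ)‖ ^ 2)⁻¹ •
                (t • EuclideanSpace.single (⟨0, by omega⟩ : Fin n) (1 : ℝ) +
                  EuclideanSpace.single (⟨n - 1, by omega⟩ : Fin n) (1 : ℝ))) /
            jdist {x : EuclideanSpace ℝ (Fin n) | 0 < x ⟨n - 1, by omega⟩}
              (EuclideanSpace.single (⟨n - 1, by omega⟩ : Fin n) (1 : ℝ))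
              (t • EuclideanSpace.single (⟨0, by omega⟩ : Fin n) (1 : ℝ) +
                EuclideanSpace.single (⟨n - 1, by omega⟩ : Fin n) (1 : ℝ)))
        atTop (𝓝 2) := by
  set i : Fin n := ⟨n - 1, by omega⟩ with hi
  set j : Fin n := ⟨0, by omega⟩ with hj
  have hij : j ≠ i := by
    rw [hi, hj]
    intro h
    have := Fin.mk.injEq (n := n) 0 (by omega) (n-1) (by omega) ▸ h
    omega
  have hfi : ∀ x, f x = EuclideanGeometry.inversion a r x := by
    intro x
    rw [hf x, EuclideanGeometry.inversion, vsub_eq_sub, vadd_eq_add, dist_eq_norm, div_pow,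
      add_comm]
  refine ⟨?_, ?_, ?_⟩
  · rw [show f = EuclideanGeometry.inversion a r from funext hfi]
    exact part1_s18 i a ha hr
  · intro x hx y hy
    rw [hfi x, hfi y]
    exact part2_s18 i a ha hr x y hx hy
  · apply Tendsto.congr' ?_ log_ratio_tendsto
    filter_upwards [eventually_ge_atTop 1] with t ht
    rw [numer_eq i j hij ht, denom_eq i j hij ht]
end
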